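/- arXiv:2112.11720 — 3 statements merged into one kernel-verified Lean document; each statement's English description precedes it below -/
import Mathlib

section
/- If G is a minimal counterexample (as defined in the context), then G contains no triangle v,u,w such that v has a neighbor of degree 1. -/
open Set

/-- The degree of a vertex `v` in a simple graph `G`. -/
noncomputable def deg {V : Type*} (G : SimpleGraph V) (v : V) : ℕ :=
  (G.neighborSet v).ncard

/-- `S` is a dominating set of `G`: every vertex not in `S` has a neighbor in `S`. -/
def IsDomSet {V : Type*} (G : SimpleGraph V) (S : Set V) : Prop :=
  ∀ v ∉ S, ∃ u ∈ S, G.Adj u v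

/-- `S` is an independent dominating set of `G`. -/
def IsIndepDomSet {V : Type*} (G : SimpleGraph V) (S : Set V) : Prop :=
  IsDomSet G S ∧ ∀ u ∈ S, ∀ v ∈ S, ¬ G.Adj u v

/-- The independent domination number `i(G)`. -/
noncomputable def indepDomNum {V : Type*} (G : SimpleGraph V) : ℕ :=
  sInf {n | ∃ S : Set V, IsIndepDomSet G S ∧ S.ncard = n}

/-- The domination number `γ(G)`. -/
noncomputable def domNum {V : Type*} (G : SimpleGraph V) : ℕ :=
  sInf {n | ∃ S : Set V, IsDomSet G S ∧ S.ncard = n}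

/-- `G` contains no cycle on 4 vertices as a subgraph. -/
def NoFourCycle {V : Type*} (G : SimpleGraph V) : Prop :=
  ¬ ∃ a b c d : V, a ≠ b ∧ a ≠ c ∧ a ≠ d ∧ b ≠ c ∧ b ≠ d ∧ c ≠ d ∧
      G.Adj a b ∧ G.Adj b c ∧ G.Adj c d ∧ G.Adj d a

/-- `nk G k` is the number of vertices of degree `k` in `G`. -/
noncomputable def nk {V : Type*} (G : SimpleGraph V) (k : ℕ) : ℕ :=
  {v | deg G v = k}.ncard

/-- The weight of a vertex: 14, 9, 6, 5 according as its degree is 0, 1, 2, 3. -/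
noncomputable def wt {V : Type*} (G : SimpleGraph V) (v : V) : ℕ :=
  if deg G v = 0 then 14 else if deg G v = 1 then 9 else if deg G v = 2 then 6 else 5

/-- The weight of a set of vertices: the sum of their weights. -/
noncomputable def wtSet {V : Type*} (G : SimpleGraph V) (X : Set V) : ℕ :=
  ∑ᶠ v ∈ X, wt G v

/-- The weight of the whole graph `G`. -/
noncomputable def wtGraph {V : Type*} (G : SimpleGraph V) : ℕ :=
  wtSet G Set.univ

/-- `G` is a minimal counterexample: subcubic, no 4-cycle, `14·i(G) > w(G)`,
and every proper subgraph `H` of `G` satisfies `14·i(H) ≤ w(H)`. -/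
def MinimalCounterexample {V : Type*} [Fintype V] (G : SimpleGraph V) : Prop :=
  (∀ v, deg G v ≤ 3) ∧ NoFourCycle G ∧ wtGraph G < 14 * indepDomNum G ∧
    ∀ H : G.Subgraph, H ≠ ⊤ → 14 * indepDomNum H.coe ≤ wtGraph H.coe

lemma exists_indepDom {V : Type*} [Fintype V] (G : SimpleGraph V) :
    ∃ S : Set V, IsIndepDomSet G S := by
  classical
  set N : Set ℕ := {n | ∃ S : Set V, (∀ a ∈ S, ∀ b ∈ S, ¬ G.Adj a b) ∧ S.ncard = n} with hN
  have hne : N.Nonempty := ⟨0, ∅, by simp, by simp⟩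
  have hbd : BddAbove N := by
    refine ⟨Fintype.card V, fun n hn => ?_⟩
    obtain ⟨S, _, rfl⟩ := hn
    calc S.ncard ≤ (Set.univ : Set V).ncard := Set.ncard_le_ncard (Set.subset_univ S) Set.finite_univ
      _ = Fintype.card V := by simp [Set.ncard_univ, Nat.card_eq_fintype_card]
  obtain ⟨S, hSind, hScard⟩ := Nat.sSup_mem hne hbd
  refine ⟨S, ?_, hSind⟩
  intro v hv
  by_contra h
  push_neg at h
  have hvS : ∀ a ∈ S, ¬ G.Adj a v := fun a ha hadj => h a ha hadj
  have hins : ∀ a ∈ insert v S, ∀ b ∈ insert v S, ¬ G.Adj a b := by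
    intro a ha b hb
    rcases ha with rfl | ha <;> rcases hb with rfl | hb
    · exact G.irrefl
    · exact fun hadj => hvS b hb hadj.symm
    · exact hvS a ha
    · exact hSind a ha b hb
  have hmem : (insert v S).ncard ∈ N := ⟨insert v S, hins, rfl⟩
  have hle := le_csSup hbd hmem
  rw [Set.ncard_insert_of_notMem hv S.toFinite, hScard] at hle
  omega

lemma wt_ge_five {V : Type*} (G : SimpleGraph V) (y : V) : 5 ≤ wt G y := by
  unfold wt; split_ifs <;> omega

/-- A minimal counterexample contains no triangle `v,u,w` such that `v` has a
neighbor of degree 1. -/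
theorem no_triangle_with_deg_one_neighbor {V : Type*} [Fintype V] (G : SimpleGraph V)
    (hG : MinimalCounterexample G) :
    ¬ ∃ v u w x : V, G.Adj v u ∧ G.Adj u w ∧ G.Adj w v ∧ G.Adj v x ∧ deg G x = 1 := by
  classical
  obtain ⟨hdeg3, hC4, hbig, hmin⟩ := hG
  rintro ⟨v, u, w, x, hvu, huw, hwv, hvx, hx1⟩
  -- distinctness
  have hvu' : v ≠ u := hvu.ne
  have huw' : u ≠ w := huw.ne
  have hwv' : w ≠ v := hwv.ne
  have hvx' : v ≠ x := hvx.ne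
  have hvw' : v ≠ w := hwv'.symm
  -- deg u ≥ 2, deg w ≥ 2
  have hsubu : ({v, w} : Set V) ⊆ G.neighborSet u := by
    intro z hz; rcases hz with rfl | rfl
    · exact hvu.symm
    · exact huw
  have hsubw : ({v, u} : Set V) ⊆ G.neighborSet w := by
    intro z hz; rcases hz with rfl | rfl
    · exact hwv
    · exact huw.symm
  have hdu2 : 2 ≤ deg G u := by
    have := Set.ncard_le_ncard hsubu (Set.toFinite _)
    rwa [Set.ncard_pair hvw'] at this
  have hdw2 : 2 ≤ deg G w := by
    have := Set.ncard_le_ncard hsubw (Set.toFinite _)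
    rwa [Set.ncard_pair hvu'] at this
  have hxu : x ≠ u := by rintro rfl; rw [hx1] at hdu2; omega
  have hxw : x ≠ w := by rintro rfl; rw [hx1] at hdw2; omega
  -- N(v) = {u, w, x}
  have hux : u ≠ x := hxu.symm
  have hwx : w ≠ x := hxw.symm
  have hNv : G.neighborSet v = {u, w, x} := by
    symm
    refine Set.eq_of_subset_of_ncard_le ?_ ?_ (Set.toFinite _)
    · intro z hz; rcases hz with rfl | rfl | rfl
      · exact hvu
      · exact hwv.symm
      · exact hvx
    · have h3 : ({u, w, x} : Set V).ncard = 3 := by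
        rw [Set.ncard_insert_of_notMem (by simp [huw', hux]) (Set.toFinite _),
          Set.ncard_pair hwx]
      rw [h3]; exact hdeg3 v
  have hdv : deg G v = 3 := by
    unfold deg; rw [hNv]
    rw [Set.ncard_insert_of_notMem (by simp [huw', hux]) (Set.toFinite _), Set.ncard_pair hwx]
  -- N(x) = {v}
  have hNx : G.neighborSet x = {v} := by
    symm
    refine Set.eq_of_subset_of_ncard_le ?_ ?_ (Set.toFinite _)
    · intro z hz; rcases hz with rfl; exact hvx.symm
    · rw [Set.ncard_singleton]; exact le_of_eq hx1
  -- the induced subgraph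
  set Q : Finset V := {v, u, w, x} with hQ
  set Tf : Finset V := Finset.univ \ Q with hTf
  set T : Set V := (↑Tf : Set V) with hT
  have hmemT : ∀ y : V, y ∈ T ↔ (y ≠ v ∧ y ≠ u ∧ y ≠ w ∧ y ≠ x) := by
    intro y; simp [hT, hTf, hQ]
  have hvT : v ∉ T := by rw [hmemT]; tauto
  set H : G.Subgraph := (⊤ : G.Subgraph).induce T with hH
  have hHverts : H.verts = T := rfl
  have hHne : H ≠ ⊤ := by
    intro h
    have : v ∈ H.verts := by rw [h]; trivial
    exact hvT this
  haveI : Fintype ↥H.verts := Set.Finite.fintype (Set.toFinite _)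
  have hHadj : ∀ a b : V, H.Adj a b ↔ a ∈ T ∧ b ∈ T ∧ G.Adj a b := by
    intro a b; simp [hH]
  -- independent dominating set of H.coe of minimal size
  have hNH : {n | ∃ S : Set ↥H.verts, IsIndepDomSet H.coe S ∧ S.ncard = n}.Nonempty := by
    obtain ⟨S, hS⟩ := exists_indepDom H.coe
    exact ⟨S.ncard, S, hS, rfl⟩
  obtain ⟨S, hS, hScard⟩ := Nat.sInf_mem hNH
  -- build independent dominating set of G
  set S' : Set V := insert v (Subtype.val '' S) with hS'
  have hvS' : v ∉ Subtype.val '' S := by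
    rintro ⟨z, _, hzv⟩; exact hvT (hzv ▸ z.2)
  have hS'dom : IsDomSet G S' := by
    intro y hy
    by_cases hyT : y ∈ T
    · have hyS : (⟨y, hyT⟩ : ↥H.verts) ∉ S := by
        intro hmem
        exact hy (Set.mem_insert_iff.mpr (Or.inr ⟨⟨y, hyT⟩, hmem, rfl⟩))
      obtain ⟨z, hzS, hzadj⟩ := hS.1 _ hyS
      refine ⟨z.val, Set.mem_insert_iff.mpr (Or.inr ⟨z, hzS, rfl⟩), ?_⟩
      exact ((hHadj z.val y).mp hzadj).2.2
    · refine ⟨v, Set.mem_insert _ _, ?_⟩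
      have hyv : y ≠ v := fun h => hy (h ▸ Set.mem_insert _ _)
      have hy4 : y = u ∨ y = w ∨ y = x := by
        by_contra hc
        push_neg at hc
        exact hyT ((hmemT y).mpr ⟨hyv, hc.1, hc.2.1, hc.2.2⟩)
      rcases hy4 with rfl | rfl | rfl
      · exact hvu
      · exact hwv.symm
      · exact hvx
  have hS'ind : ∀ a ∈ S', ∀ b ∈ S', ¬ G.Adj a b := by
    have key : ∀ z : ↥H.verts, z.val ∈ Subtype.val '' S → ¬ G.Adj v z.val := by
      intro z _ hadj
      have h1 : z.val ∈ ({u, w, x} : Set V) := by rw [← hNv]; exact hadj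
      have h2 := (hmemT z.val).mp z.2
      rcases h1 with h | h | h
      · exact h2.2.1 h
      · exact h2.2.2.1 h
      · exact h2.2.2.2 h
    intro a ha b hb
    rcases Set.mem_insert_iff.mp ha with rfl | ⟨za, hza, rfl⟩ <;>
      rcases Set.mem_insert_iff.mp hb with hb' | ⟨zb, hzb, hzb'⟩
    · rw [hb']; exact G.irrefl
    · rw [← hzb']; exact key zb ⟨zb, hzb, rfl⟩
    · rw [hb']; intro hadj; exact key za ⟨za, hza, rfl⟩ hadj.symm
    · rw [← hzb']
      intro hadj
      have : H.coe.Adj za zb := by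
        show H.Adj za.val zb.val
        rw [hHadj]
        exact ⟨za.2, zb.2, by rw [hzb'] at hadj ⊢; exact hadj⟩
      exact hS.2 za hza zb hzb this
  have hS'card : S'.ncard = S.ncard + 1 := by
    rw [hS', Set.ncard_insert_of_notMem hvS' (Set.toFinite _),
      Set.ncard_image_of_injective S Subtype.val_injective]
  have hiG : indepDomNum G ≤ S.ncard + 1 := by
    rw [← hS'card]
    exact Nat.sInf_le ⟨S', ⟨hS'dom, hS'ind⟩, rfl⟩
  -- weights
  have hwtG : wtGraph G = ∑ y ∈ Tf, wt G y + ∑ y ∈ Q, wt G y := by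
    rw [wtGraph, wtSet, finsum_mem_univ, finsum_eq_sum_of_fintype]
    rw [hTf, Finset.sum_sdiff (Finset.subset_univ Q)]
  have hQsum : 24 ≤ ∑ y ∈ Q, wt G y := by
    have hQcard : ∑ y ∈ Q, wt G y = wt G v + (wt G u + (wt G w + wt G x)) := by
      rw [hQ]
      rw [Finset.sum_insert (by simp [hvu', hvw', hvx']),
        Finset.sum_insert (by simp [huw', hux]),
        Finset.sum_insert (by simp [hwx]), Finset.sum_singleton]
    have hwv5 : wt G v = 5 := by unfold wt; rw [hdv]; norm_num
    have hwx9 : wt G x = 9 := by unfold wt; rw [hx1]; norm_num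
    have := wt_ge_five G u
    have := wt_ge_five G w
    omega
  -- weight of H
  set f : V → ℕ := fun y => if h : y ∈ T then wt H.coe ⟨y, h⟩ else 0 with hf
  have hwtH : wtGraph H.coe = ∑ y ∈ Tf, f y := by
    rw [wtGraph, wtSet, finsum_mem_univ]
    have h1 : ∀ z : ↥H.verts, wt H.coe z = f z.val := by
      intro z
      show wt H.coe z = if h : ↑z ∈ T then wt H.coe ⟨↑z, h⟩ else 0
      rw [dif_pos (show ↑z ∈ T from z.2)]
    rw [finsum_congr h1, finsum_set_coe_eq_finsum_mem, hHverts, hT, finsum_mem_coe_finset]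
  -- pointwise bound
  have hpoint : ∀ y ∈ Tf, f y ≤ wt G y + ((if G.Adj u y then 5 else 0)
      + (if G.Adj w y then 5 else 0)) := by
    intro y hyTf
    have hyT : y ∈ T := by rw [hT]; exact_mod_cast hyTf
    have hyne := (hmemT y).mp hyT
    -- compute the neighbor set of y in H.coe
    have himg : Subtype.val '' (H.coe.neighborSet ⟨y, hyT⟩) = G.neighborSet y \ {u, w} := by
      ext b
      constructor
      · rintro ⟨z, hz, rfl⟩
        have : H.Adj y z.val := hz
        rw [hHadj] at this
        obtain ⟨_, hzT, hadj⟩ := this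
        have hzb := (hmemT z.val).mp hzT
        exact ⟨hadj, by simp [hzb.2.1, hzb.2.2.1]⟩
      · rintro ⟨hb, hbuw⟩
        simp only [Set.mem_insert_iff, Set.mem_singleton_iff] at hbuw
        push_neg at hbuw
        have hvN : v ∉ G.neighborSet y := by
          intro hvN
          have h2 : y ∈ G.neighborSet v := (SimpleGraph.adj_symm G hvN)
          rw [hNv] at h2
          rcases h2 with h | h | h
          · exact hyne.2.1 h
          · exact hyne.2.2.1 h
          · exact hyne.2.2.2 h
        have hxN : x ∉ G.neighborSet y := by
          intro hxN
          have h2 : y ∈ G.neighborSet x := (SimpleGraph.adj_symm G hxN)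
          rw [hNx] at h2
          exact hyne.1 h2
        have hbv : b ≠ v := fun h => hvN (h ▸ hb)
        have hbx : b ≠ x := fun h => hxN (h ▸ hb)
        have hbT : b ∈ T := (hmemT b).mpr ⟨hbv, hbuw.1, hbuw.2, hbx⟩
        refine ⟨⟨b, hbT⟩, ?_, rfl⟩
        show H.Adj y b
        rw [hHadj]
        exact ⟨hyT, hbT, hb⟩
    have hdegH : deg H.coe ⟨y, hyT⟩ = (G.neighborSet y \ {u, w}).ncard := by
      unfold deg
      rw [← himg, Set.ncard_image_of_injective _ Subtype.val_injective]
    have hdy3 : deg G y ≤ 3 := hdeg3 y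
    have hym : y ∈ Tf := hyTf
    have hfy : f y = wt H.coe ⟨y, hyT⟩ := by rw [hf]; simp only; rw [dif_pos hyT]
    by_cases hu : G.Adj u y <;> by_cases hw : G.Adj w y
    · -- both
      have hsub : ({u, w} : Set V) ⊆ G.neighborSet y := by
        intro z hz; rcases hz with rfl | rfl
        · exact hu.symm
        · exact hw.symm
      have hdd : (G.neighborSet y \ {u, w}).ncard = deg G y - 2 := by
        rw [Set.ncard_diff hsub (Set.toFinite _), Set.ncard_pair huw']; rfl
      have hd2 : 2 ≤ deg G y := by
        have := Set.ncard_le_ncard hsub (Set.toFinite _)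
        rwa [Set.ncard_pair huw'] at this
      rw [hfy, if_pos hu, if_pos hw]
      have hdH : deg H.coe ⟨y, hyT⟩ = deg G y - 2 := by rw [hdegH, hdd]
      unfold wt
      rw [hdH]
      have : deg G y = 2 ∨ deg G y = 3 := by omega
      rcases this with h | h <;> rw [h] <;> norm_num
    · -- u only
      have humem : u ∈ G.neighborSet y := hu.symm
      have hdd : (G.neighborSet y \ {u, w}).ncard = deg G y - 1 := by
        have : G.neighborSet y \ {u, w} = G.neighborSet y \ {u} := by
          ext z
          simp only [Set.mem_diff, Set.mem_insert_iff, Set.mem_singleton_iff]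
          constructor
          · rintro ⟨h1, h2⟩; exact ⟨h1, fun h => h2 (Or.inl h)⟩
          · rintro ⟨h1, h2⟩
            refine ⟨h1, ?_⟩
            rintro (rfl | rfl)
            · exact h2 rfl
            · exact hw h1.symm
        rw [this, Set.ncard_diff_singleton_of_mem humem]; rfl
      have hd1 : 1 ≤ deg G y := by
        have : ({u} : Set V).ncard ≤ (G.neighborSet y).ncard :=
          Set.ncard_le_ncard (by simpa using humem) (Set.toFinite _)
        simpa [deg] using this
      rw [hfy, if_pos hu, if_neg hw]
      have hdH : deg H.coe ⟨y, hyT⟩ = deg G y - 1 := by rw [hdegH, hdd]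
      unfold wt
      rw [hdH]
      have : deg G y = 1 ∨ deg G y = 2 ∨ deg G y = 3 := by omega
      rcases this with h | h | h <;> rw [h] <;> norm_num
    · -- w only
      have hwmem : w ∈ G.neighborSet y := hw.symm
      have hdd : (G.neighborSet y \ {u, w}).ncard = deg G y - 1 := by
        have : G.neighborSet y \ {u, w} = G.neighborSet y \ {w} := by
          ext z
          simp only [Set.mem_diff, Set.mem_insert_iff, Set.mem_singleton_iff]
          constructor
          · rintro ⟨h1, h2⟩; exact ⟨h1, fun h => h2 (Or.inr h)⟩
          · rintro ⟨h1, h2⟩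
            refine ⟨h1, ?_⟩
            rintro (rfl | rfl)
            · exact hu h1.symm
            · exact h2 rfl
        rw [this, Set.ncard_diff_singleton_of_mem hwmem]; rfl
      have hd1 : 1 ≤ deg G y := by
        have : ({w} : Set V).ncard ≤ (G.neighborSet y).ncard :=
          Set.ncard_le_ncard (by simpa using hwmem) (Set.toFinite _)
        simpa [deg] using this
      rw [hfy, if_neg hu, if_pos hw]
      have hdH : deg H.coe ⟨y, hyT⟩ = deg G y - 1 := by rw [hdegH, hdd]
      unfold wt
      rw [hdH]
      have : deg G y = 1 ∨ deg G y = 2 ∨ deg G y = 3 := by omega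
      rcases this with h | h | h <;> rw [h] <;> norm_num
    · -- neither
      have hdd : G.neighborSet y \ {u, w} = G.neighborSet y := by
        ext z
        simp only [Set.mem_diff, Set.mem_insert_iff, Set.mem_singleton_iff]
        constructor
        · exact fun h => h.1
        · intro h
          refine ⟨h, ?_⟩
          rintro (rfl | rfl)
          · exact hu h.symm
          · exact hw h.symm
      rw [hfy, if_neg hu, if_neg hw]
      have hdH : deg H.coe ⟨y, hyT⟩ = deg G y := by rw [hdegH, hdd]; rfl
      unfold wt
      rw [hdH]
      omega
  -- sum of indicator for u
  have hindu : ∑ y ∈ Tf, (if G.Adj u y then 5 else 0) ≤ 5 := by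
    rw [← Finset.sum_filter]
    rw [Finset.sum_const, smul_eq_mul]
    have hcard : (Tf.filter (fun y => G.Adj u y)).card ≤ 1 := by
      have hsub : (↑(Tf.filter (fun y => G.Adj u y)) : Set V) ⊆ G.neighborSet u \ {v, w} := by
        intro y hy
        simp only [Finset.coe_filter, Set.mem_setOf_eq] at hy
        obtain ⟨hyTf, hadj⟩ := hy
        have hyne := (hmemT y).mp (by rw [hT]; exact_mod_cast hyTf)
        exact ⟨hadj, by simp [hyne.1, hyne.2.2.1]⟩
      have h1 : (G.neighborSet u \ {v, w}).ncard = deg G u - 2 := by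
        rw [Set.ncard_diff hsubu (Set.toFinite _), Set.ncard_pair hvw']; rfl
      have h2 := Set.ncard_le_ncard hsub (Set.toFinite _)
      rw [Set.ncard_coe_finset] at h2
      have := hdeg3 u
      omega
    omega
  have hindw : ∑ y ∈ Tf, (if G.Adj w y then 5 else 0) ≤ 5 := by
    rw [← Finset.sum_filter]
    rw [Finset.sum_const, smul_eq_mul]
    have hcard : (Tf.filter (fun y => G.Adj w y)).card ≤ 1 := by
      have hsub : (↑(Tf.filter (fun y => G.Adj w y)) : Set V) ⊆ G.neighborSet w \ {v, u} := by
        intro y hy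
        simp only [Finset.coe_filter, Set.mem_setOf_eq] at hy
        obtain ⟨hyTf, hadj⟩ := hy
        have hyne := (hmemT y).mp (by rw [hT]; exact_mod_cast hyTf)
        exact ⟨hadj, by simp [hyne.1, hyne.2.1]⟩
      have h1 : (G.neighborSet w \ {v, u}).ncard = deg G w - 2 := by
        rw [Set.ncard_diff hsubw (Set.toFinite _), Set.ncard_pair hvu']; rfl
      have h2 := Set.ncard_le_ncard hsub (Set.toFinite _)
      rw [Set.ncard_coe_finset] at h2
      have := hdeg3 w
      omega
    omega
  -- combine weight bounds
  have hwtHle : wtGraph H.coe ≤ ∑ y ∈ Tf, wt G y + 10 := by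
    rw [hwtH]
    calc ∑ y ∈ Tf, f y
        ≤ ∑ y ∈ Tf, (wt G y + ((if G.Adj u y then 5 else 0) + (if G.Adj w y then 5 else 0))) :=
          Finset.sum_le_sum hpoint
      _ = ∑ y ∈ Tf, wt G y + (∑ y ∈ Tf, (if G.Adj u y then 5 else 0)
            + ∑ y ∈ Tf, (if G.Adj w y then 5 else 0)) := by
          rw [Finset.sum_add_distrib, Finset.sum_add_distrib]
      _ ≤ ∑ y ∈ Tf, wt G y + 10 := by omega
  -- final contradiction
  have hmin' := hmin H hHne
  have hScard' : S.ncard = indepDomNum H.coe := hScard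
  have h14 : 14 * S.ncard ≤ wtGraph H.coe := by rw [hScard']; exact hmin'
  have : 14 * indepDomNum G ≤ wtGraph G := by
    calc 14 * indepDomNum G ≤ 14 * (S.ncard + 1) := Nat.mul_le_mul_left 14 hiG
      _ = 14 * S.ncard + 14 := by ring
      _ ≤ wtGraph H.coe + 14 := by omega
      _ ≤ ∑ y ∈ Tf, wt G y + 24 := by omega
      _ ≤ wtGraph G := by omega
  omega
end

section
/- If G is a minimal counterexample (as defined in the context), then G contains no triangle having a vertex of degree 2. -/
open Set

noncomputable def w' (d : ℕ) : ℕ :=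
  if d = 0 then 14 else if d = 1 then 9 else if d = 2 then 6 else 5

lemma wt_eq {V : Type*} (G : SimpleGraph V) (v : V) : wt G v = w' (deg G v) := rfl

lemma exists_iids {V : Type*} [Finite V] (G : SimpleGraph V) : ∃ S, IsIndepDomSet G S := by
  classical
  have hfin : {S : Set V | ∀ u ∈ S, ∀ v ∈ S, ¬ G.Adj u v}.Finite := Set.toFinite _
  obtain ⟨S, hS, hmax⟩ := Set.Finite.exists_maximalFor (fun S => S.ncard) _ hfin
    ⟨∅, by simp⟩
  refine ⟨S, ?_, hS⟩
  intro v hv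
  by_contra hno
  push_neg at hno
  have hvS : ∀ s ∈ S, ¬ G.Adj s v := fun s hs h => hno s hs h
  have hins : insert v S ∈ {S : Set V | ∀ u ∈ S, ∀ v ∈ S, ¬ G.Adj u v} := by
    rintro a (rfl | ha) b (rfl | hb)
    · simp
    · exact fun h => hvS b hb h.symm
    · exact hvS a ha
    · exact hS a ha b hb
  have hle : S.ncard ≤ (insert v S).ncard := Set.ncard_le_ncard (subset_insert _ _) (toFinite _)
  have : (insert v S).ncard ≤ S.ncard := hmax hins hle
  rw [Set.ncard_insert_of_notMem hv (toFinite _)] at this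
  omega

/-- induced subgraph on a vertex set -/
@[reducible] def indSub {V : Type*} (G : SimpleGraph V) (B : Set V) : G.Subgraph where
  verts := B
  Adj a b := G.Adj a b ∧ a ∈ B ∧ b ∈ B
  adj_sub h := h.1
  edge_vert h := h.2.1
  symm := ⟨fun a b h => ⟨h.1.symm, h.2.2, h.2.1⟩⟩

lemma deg_indSub {V : Type*} (G : SimpleGraph V) (B : Set V) (b : ↥B) :
    deg (indSub G B).coe b = (G.neighborSet (b : V) ∩ B).ncard := by
  unfold deg
  rw [← Set.ncard_image_of_injective _ (Subtype.val_injective (p := (· ∈ B)))]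
  congr 1
  ext r
  constructor
  · rintro ⟨c, hc, rfl⟩
    have : (indSub G B).coe.Adj b c := hc
    rw [SimpleGraph.Subgraph.coe_adj] at this
    exact ⟨this.1, c.2⟩
  · rintro ⟨hadj, hrB⟩
    refine ⟨⟨r, hrB⟩, ?_, rfl⟩
    show (indSub G B).coe.Adj b ⟨r, hrB⟩
    exact (SimpleGraph.Subgraph.coe_adj _ _ _).mpr ⟨hadj, b.2, hrB⟩


lemma indepDomNum_le_combine {V : Type*} [Fintype V] (G : SimpleGraph V) (A P : Set V)
    (hPA : P ⊆ A)
    (hPind : ∀ p ∈ P, ∀ q ∈ P, ¬ G.Adj p q)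
    (hPdom : ∀ a ∈ A, a ∈ P ∨ ∃ p ∈ P, G.Adj p a)
    (hPN : ∀ p ∈ P, G.neighborSet p ⊆ A) :
    indepDomNum G ≤ indepDomNum (indSub G Aᶜ).coe + P.ncard := by
  classical
  set H := indSub G Aᶜ with hH
  have hne : {n | ∃ S : Set ↥(Aᶜ), IsIndepDomSet H.coe S ∧ S.ncard = n}.Nonempty := by
    obtain ⟨S, hS⟩ := exists_iids H.coe
    exact ⟨S.ncard, S, hS, rfl⟩
  obtain ⟨S0, hS0, hcard⟩ := Nat.sInf_mem hne
  set S' : Set V := (Subtype.val '' S0) ∪ P with hS'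
  have hind : IsIndepDomSet G S' := by
    constructor
    · -- dominating
      intro q hq
      by_cases hqA : q ∈ A
      · rcases hPdom q hqA with hqP | ⟨p, hp, hadj⟩
        · exact absurd (Or.inr hqP) hq
        · exact ⟨p, Or.inr hp, hadj⟩
      · have hqB : q ∈ Aᶜ := hqA
        have hqS0 : (⟨q, hqB⟩ : ↥(Aᶜ)) ∉ S0 := by
          intro h
          exact hq (Or.inl ⟨_, h, rfl⟩)
        obtain ⟨s, hs, hadj⟩ := hS0.1 _ hqS0
        rw [SimpleGraph.Subgraph.coe_adj] at hadj
        exact ⟨s, Or.inl ⟨s, hs, rfl⟩, hadj.1⟩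
    · -- independent
      rintro a (⟨a0, ha0, rfl⟩ | haP) b (⟨b0, hb0, rfl⟩ | hbP)
      · intro hadj
        exact hS0.2 a0 ha0 b0 hb0 ((SimpleGraph.Subgraph.coe_adj _ _ _).mpr
          ⟨hadj, a0.2, b0.2⟩)
      · intro hadj
        exact a0.2 (hPN b hbP hadj.symm)
      · intro hadj
        exact b0.2 (hPN a haP hadj)
      · exact hPind a haP b hbP
  have hmem : indepDomNum G ≤ S'.ncard :=
    Nat.sInf_le ⟨S', hind, rfl⟩
  have hle : S'.ncard ≤ S0.ncard + P.ncard := by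
    refine le_trans (Set.ncard_union_le _ _) ?_
    rw [Set.ncard_image_of_injective _ (Subtype.val_injective (p := (· ∈ Aᶜ)))]
  have hcard' : S0.ncard = indepDomNum H.coe := hcard
  omega

lemma master {V : Type*} [Fintype V] (G : SimpleGraph V) (hG : MinimalCounterexample G)
    (A P T : Set V) (hA : A.Nonempty) (hPA : P ⊆ A)
    (hPind : ∀ p ∈ P, ∀ q ∈ P, ¬ G.Adj p q)
    (hPdom : ∀ a ∈ A, a ∈ P ∨ ∃ p ∈ P, G.Adj p a)
    (hPN : ∀ p ∈ P, G.neighborSet p ⊆ A)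
    (hT : T ⊆ Aᶜ)
    (hTN : ∀ q, q ∉ A → q ∉ T → G.neighborSet q ∩ A = ∅)
    (hbound : 14 * P.ncard + ∑ᶠ t ∈ T, w' ((G.neighborSet t ∩ Aᶜ).ncard)
        ≤ (∑ᶠ a ∈ A, wt G a) + ∑ᶠ t ∈ T, wt G t) : False := by
  classical
  set H := indSub G Aᶜ with hH
  have hne : H ≠ ⊤ := by
    intro h
    obtain ⟨a, ha⟩ := hA
    have : a ∈ H.verts := by rw [h]; trivial
    exact this ha
  have hmin := hG.2.2.2 H hne
  have hi := indepDomNum_le_combine G A P hPA hPind hPdom hPN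
  rw [← hH] at hi
  -- weight computation
  have hwtH : wtGraph H.coe = (∑ᶠ t ∈ T, w' ((G.neighborSet t ∩ Aᶜ).ncard))
      + ∑ᶠ q ∈ (Aᶜ \ T), wt G q := by
    rw [wtGraph, wtSet, finsum_mem_univ]
    show (∑ᶠ (b : ↥(Aᶜ)), wt H.coe b) = _
    have h1 : ∑ᶠ (b : ↥(Aᶜ)), wt H.coe b
        = ∑ᶠ (b : ↥(Aᶜ)), w' ((G.neighborSet (b : V) ∩ Aᶜ).ncard) := by
      apply finsum_congr
      intro b
      rw [wt_eq, deg_indSub]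
    rw [h1]
    have h2 : ∑ᶠ (b : ↥(Aᶜ)), w' ((G.neighborSet (b : V) ∩ Aᶜ).ncard)
        = ∑ᶠ q ∈ Aᶜ, w' ((G.neighborSet q ∩ Aᶜ).ncard) :=
      finsum_set_coe_eq_finsum_mem (f := fun q => w' ((G.neighborSet q ∩ Aᶜ).ncard)) (Aᶜ)
    rw [h2]
    have h4 : ∑ᶠ q ∈ Aᶜ, w' ((G.neighborSet q ∩ Aᶜ).ncard)
        = (∑ᶠ q ∈ T, w' ((G.neighborSet q ∩ Aᶜ).ncard))
          + ∑ᶠ q ∈ (Aᶜ \ T), w' ((G.neighborSet q ∩ Aᶜ).ncard) := by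
      rw [← finsum_mem_union disjoint_sdiff_right (toFinite _) (toFinite _),
        Set.union_diff_cancel hT]
    rw [h4]
    congr 1
    apply finsum_mem_congr rfl
    intro q hq
    have hN : G.neighborSet q ∩ A = ∅ := hTN q (fun h => hq.1 h) hq.2
    have : G.neighborSet q ∩ Aᶜ = G.neighborSet q := by
      apply Set.inter_eq_self_of_subset_left
      intro r hr
      by_contra hrA
      have hmem : r ∈ G.neighborSet q ∩ A := ⟨hr, not_not.mp hrA⟩
      rw [hN] at hmem
      exact hmem
    rw [this, wt_eq, deg]
  have hwtG : wtGraph G = (∑ᶠ a ∈ A, wt G a) + (∑ᶠ t ∈ T, wt G t)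
      + ∑ᶠ q ∈ (Aᶜ \ T), wt G q := by
    rw [wtGraph, wtSet]
    have hd : Disjoint A (T ∪ (Aᶜ \ T)) := by
      rw [Set.union_diff_cancel hT]
      exact disjoint_compl_right
    have h5 : ∑ᶠ v ∈ (univ : Set V), wt G v = ∑ᶠ v ∈ A ∪ (T ∪ (Aᶜ \ T)), wt G v := by
      rw [Set.union_diff_cancel hT, Set.union_compl_self]
    rw [h5, finsum_mem_union hd (toFinite _) (toFinite _),
      finsum_mem_union disjoint_sdiff_right (toFinite _) (toFinite _)]
    ring
  have hlt := hG.2.2.1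
  omega

section Geometry
variable {V : Type*} [Fintype V] {G : SimpleGraph V}

lemma one_le_deg {u a : V} (ha : G.Adj u a) : 1 ≤ deg G u :=
  (Set.ncard_pos (toFinite _)).mpr ⟨a, ha⟩

lemma two_le_deg {u a b : V} (ha : G.Adj u a) (hb : G.Adj u b) (hab : a ≠ b) :
    2 ≤ deg G u := by
  have hsub : ({a, b} : Set V) ⊆ G.neighborSet u := by rintro r (rfl|rfl) <;> assumption
  calc 2 = ({a, b} : Set V).ncard := (Set.ncard_pair hab).symm
    _ ≤ _ := Set.ncard_le_ncard hsub (toFinite _)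

lemma nbhd_one {v a : V} (h1 : deg G v = 1) (ha : G.Adj v a) :
    G.neighborSet v = {a} := by
  symm
  apply Set.eq_of_subset_of_ncard_le
  · rintro r rfl; exact ha
  · rw [show (G.neighborSet v).ncard = 1 from h1, Set.ncard_singleton]
  · exact toFinite _

lemma nbhd_two {v a b : V} (h2 : deg G v = 2) (ha : G.Adj v a) (hb : G.Adj v b)
    (hab : a ≠ b) : G.neighborSet v = {a, b} := by
  symm
  apply Set.eq_of_subset_of_ncard_le
  · rintro r (rfl|rfl) <;> assumption
  · rw [show (G.neighborSet v).ncard = 2 from h2, Set.ncard_pair hab]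
  · exact toFinite _

lemma nbhd_three {v a b c : V} (h3 : deg G v = 3) (ha : G.Adj v a) (hb : G.Adj v b)
    (hc : G.Adj v c) (hab : a ≠ b) (hac : a ≠ c) (hbc : b ≠ c) :
    G.neighborSet v = {a, b, c} := by
  symm
  apply Set.eq_of_subset_of_ncard_le
  · rintro r (rfl|rfl|rfl) <;> assumption
  · rw [show (G.neighborSet v).ncard = 3 from h3]
    rw [Set.ncard_insert_of_notMem (by simp [hab, hac]) (toFinite _), Set.ncard_pair hbc]
  · exact toFinite _

lemma exists_third {u a b : V} (h3 : deg G u = 3) (ha : G.Adj u a) (hb : G.Adj u b)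
    (hab : a ≠ b) : ∃ x, G.Adj u x ∧ x ≠ a ∧ x ≠ b := by
  by_contra h
  push_neg at h
  have hsub : G.neighborSet u ⊆ ({a, b} : Set V) := by
    intro r hr
    by_cases hra : r = a
    · exact Or.inl hra
    · exact Or.inr (h r hr hra)
  have := Set.ncard_le_ncard hsub (toFinite _)
  rw [show (G.neighborSet u).ncard = 3 from h3, Set.ncard_pair hab] at this
  omega

lemma c4 (hC : NoFourCycle G) {a b c d : V} (hab : G.Adj a b) (hbc : G.Adj b c)
    (hcd : G.Adj c d) (hda : G.Adj d a) (hac : a ≠ c) (hbd : b ≠ d) : False :=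
  hC ⟨a, b, c, d, hab.ne, hac, hda.ne', hbc.ne, hbd, hcd.ne, hab, hbc, hcd, hda⟩

lemma dB_succ {t a0 : V} {A : Set V} (h : G.neighborSet t ∩ A = {a0}) :
    (G.neighborSet t ∩ Aᶜ).ncard + 1 = deg G t := by
  have hu : (G.neighborSet t ∩ A) ∪ (G.neighborSet t ∩ Aᶜ) = G.neighborSet t :=
    Set.inter_union_compl _ _
  have hd : Disjoint (G.neighborSet t ∩ A) (G.neighborSet t ∩ Aᶜ) :=
    Disjoint.mono Set.inter_subset_right Set.inter_subset_right disjoint_compl_right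
  have := Set.ncard_union_eq hd (toFinite _) (toFinite _)
  rw [hu, h, Set.ncard_singleton] at this
  rw [deg, this]
  omega

end Geometry

section Cases
variable {V : Type*} [Fintype V] {G : SimpleGraph V}

lemma not_adj_of_nbhd {a b : V} {s : Set V} (h : G.neighborSet a = s) (hb : b ∉ s) :
    ¬ G.Adj b a := fun hadj => hb (by rw [← h]; exact hadj.symm)

lemma exists_second {x u : V} (h2 : deg G x = 2) (hu : G.Adj x u) :
    ∃ z, G.Adj x z ∧ z ≠ u := by
  by_contra h
  push_neg at h
  have hsub : G.neighborSet x ⊆ ({u} : Set V) := fun r hr => h r hr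
  have := Set.ncard_le_ncard hsub (toFinite _)
  rw [show (G.neighborSet x).ncard = 2 from h2, Set.ncard_singleton] at this
  omega

lemma hTN_of {A T : Set V} (hAN : ∀ a ∈ A, G.neighborSet a ⊆ A ∪ T) :
    ∀ q, q ∉ A → q ∉ T → G.neighborSet q ∩ A = ∅ := by
  intro q hqA hqT
  ext r
  simp only [Set.mem_inter_iff, Set.mem_empty_iff_false, iff_false, not_and]
  intro hr hrA
  have hq : q ∈ G.neighborSet r := by
    have : G.Adj q r := hr
    exact this.symm
  rcases hAN r hrA hq with h | h
  · exact hqA h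
  · exact hqT h

lemma fsum3 {f : V → ℕ} {a b c : V} (hab : a ≠ b) (hac : a ≠ c) (hbc : b ≠ c) :
    ∑ᶠ i ∈ ({a, b, c} : Set V), f i = f a + f b + f c := by
  rw [finsum_mem_insert _ (by simp [hab, hac]) (toFinite _), finsum_mem_pair hbc]
  ring

lemma fsum4 {f : V → ℕ} {a b c d : V} (hab : a ≠ b) (hac : a ≠ c) (had : a ≠ d)
    (hbc : b ≠ c) (hbd : b ≠ d) (hcd : c ≠ d) :
    ∑ᶠ i ∈ ({a, b, c, d} : Set V), f i = f a + f b + f c + f d := by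
  rw [finsum_mem_insert _ (by simp [hab, hac, had]) (toFinite _),
    finsum_mem_insert _ (by simp [hbc, hbd]) (toFinite _), finsum_mem_pair hcd]
  ring

lemma fsum6 {f : V → ℕ} {a b c d e g : V} (hab : a ≠ b) (hac : a ≠ c) (had : a ≠ d)
    (hae : a ≠ e) (hag : a ≠ g) (hbc : b ≠ c) (hbd : b ≠ d) (hbe : b ≠ e) (hbg : b ≠ g)
    (hcd : c ≠ d) (hce : c ≠ e) (hcg : c ≠ g) (hde : d ≠ e) (hdg : d ≠ g) (heg : e ≠ g) :
    ∑ᶠ i ∈ ({a, b, c, d, e, g} : Set V), f i = f a + f b + f c + f d + f e + f g := by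
  rw [finsum_mem_insert _ (by simp [hab, hac, had, hae, hag]) (toFinite _),
    finsum_mem_insert _ (by simp [hbc, hbd, hbe, hbg]) (toFinite _),
    finsum_mem_insert _ (by simp [hcd, hce, hcg]) (toFinite _),
    finsum_mem_insert _ (by simp [hde, hdg]) (toFinite _), finsum_mem_pair heg]
  ring

lemma caseA (hG : MinimalCounterexample G) (v u w : V)
    (hvu : G.Adj v u) (huw : G.Adj u w) (hwv : G.Adj w v)
    (hNv : G.neighborSet v = {u, w}) (h2u : deg G u = 2) (h2w : deg G w = 2) : False := by
  have hvu' : v ≠ u := hvu.ne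
  have huw' : u ≠ w := huw.ne
  have hvw' : v ≠ w := hwv.ne'
  have hNu : G.neighborSet u = {v, w} := nbhd_two h2u hvu.symm huw hvw'
  have hNw : G.neighborSet w = {u, v} := nbhd_two h2w huw.symm hwv hvu'.symm
  refine master G hG ({v, u, w} : Set V) ({v} : Set V) (∅ : Set V) ⟨v, by simp⟩ (by simp) ?_ ?_ ?_ (by simp)
    (hTN_of ?_) ?_
  · rintro p rfl q rfl
    exact G.loopless.irrefl _
  · rintro a (rfl | rfl | rfl)
    · exact Or.inl rfl
    · exact Or.inr ⟨v, rfl, hvu⟩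
    · exact Or.inr ⟨v, rfl, hwv.symm⟩
  · rintro p rfl
    rw [hNv]
    rintro r (rfl | rfl) <;> simp
  · rintro a (rfl | rfl | rfl)
    · rw [hNv]; rintro r (rfl | rfl) <;> simp
    · rw [hNu]; rintro r (rfl | rfl) <;> simp
    · rw [hNw]; rintro r (rfl | rfl) <;> simp
  · rw [finsum_mem_empty, finsum_mem_empty,
      fsum3 (f := fun a => wt G a) hvu' hvw' huw', Set.ncard_singleton]
    have e1 : wt G v = 6 := by
      rw [wt_eq, show deg G v = 2 from by rw [deg, hNv, Set.ncard_pair huw']]; rfl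
    have e2 : wt G u = 6 := by rw [wt_eq, h2u]; rfl
    have e3 : wt G w = 6 := by rw [wt_eq, h2w]; rfl
    rw [e1, e2, e3]
    omega
lemma caseB (hG : MinimalCounterexample G) (v u w : V)
    (hvu : G.Adj v u) (huw : G.Adj u w) (hwv : G.Adj w v)
    (hNv : G.neighborSet v = {u, w}) (h3u : deg G u = 3) (h2w : deg G w = 2) : False := by
  have hvu' : v ≠ u := hvu.ne
  have huw' : u ≠ w := huw.ne
  have hvw' : v ≠ w := hwv.ne'
  have h2v : deg G v = 2 := by rw [deg, hNv, Set.ncard_pair huw']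
  obtain ⟨x, hux, hxv, hxw⟩ := exists_third h3u hvu.symm huw hvw'
  have hxu : x ≠ u := hux.ne'
  have hNu : G.neighborSet u = {v, w, x} :=
    nbhd_three h3u hvu.symm huw hux hvw' (Ne.symm hxv) (Ne.symm hxw)
  have hNw : G.neighborSet w = {u, v} := nbhd_two h2w huw.symm hwv hvu'.symm
  have hxnv : ¬ G.Adj x v := not_adj_of_nbhd hNv (by simp [hxu, hxw])
  have hxnw : ¬ G.Adj x w := not_adj_of_nbhd hNw (by simp [hxu, hxv])
  have hdx3 : deg G x ≤ 3 := hG.1 x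
  have hdx1 : 1 ≤ deg G x := one_le_deg hux.symm
  have e1 : wt G v = 6 := by rw [wt_eq, h2v]; rfl
  have e2 : wt G u = 5 := by rw [wt_eq, h3u]; rfl
  have e3 : wt G w = 6 := by rw [wt_eq, h2w]; rfl
  by_cases hdx : deg G x = 3
  · -- A = {v,u,w}, P = {v}, T = {x}
    have hNxA : G.neighborSet x ∩ ({v, u, w} : Set V) = {u} := by
      ext r
      constructor
      · rintro ⟨hadj, rfl | rfl | rfl⟩
        · exact absurd hadj hxnv
        · rfl
        · exact absurd hadj hxnw
      · rintro rfl
        exact ⟨hux.symm, by simp⟩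
    refine master G hG ({v, u, w} : Set V) ({v} : Set V) ({x} : Set V) ⟨v, by simp⟩
      (by simp) ?_ ?_ ?_ ?_ (hTN_of ?_) ?_
    · rintro p rfl q rfl; exact G.loopless.irrefl _
    · rintro a (rfl | rfl | rfl)
      · exact Or.inl rfl
      · exact Or.inr ⟨v, rfl, hvu⟩
      · exact Or.inr ⟨v, rfl, hwv.symm⟩
    · rintro p rfl; rw [hNv]; rintro r (rfl | rfl) <;> simp
    · rintro t rfl; simp [hxv, hxu, hxw]
    · rintro a (rfl | rfl | rfl)
      · rw [hNv]; rintro r (rfl | rfl) <;> simp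
      · rw [hNu]; rintro r (rfl | rfl | rfl) <;> simp
      · rw [hNw]; rintro r (rfl | rfl) <;> simp
    · rw [finsum_mem_singleton, finsum_mem_singleton,
        fsum3 (f := fun a => wt G a) hvu' hvw' huw', Set.ncard_singleton]
      have hx2 := dB_succ hNxA
      have e4 : wt G x = 5 := by rw [wt_eq, hdx]; rfl
      have e5 : w' ((G.neighborSet x ∩ ({v, u, w} : Set V)ᶜ).ncard) = 6 := by
        rw [show (G.neighborSet x ∩ ({v, u, w} : Set V)ᶜ).ncard = 2 from by omega]; rfl
      rw [e1, e2, e3, e4, e5]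
      omega
  · by_cases hdx1' : deg G x = 1
    · -- A = {v,u,w,x}, P={u}, T=∅
      have hNx : G.neighborSet x = {u} := nbhd_one hdx1' hux.symm
      refine master G hG ({v, u, w, x} : Set V) ({u} : Set V) (∅ : Set V) ⟨v, by simp⟩
        (by simp) ?_ ?_ ?_ (by simp) (hTN_of ?_) ?_
      · rintro p rfl q rfl; exact G.loopless.irrefl _
      · rintro a (rfl | rfl | rfl | rfl)
        · exact Or.inr ⟨u, rfl, hvu.symm⟩
        · exact Or.inl rfl
        · exact Or.inr ⟨u, rfl, huw⟩
        · exact Or.inr ⟨u, rfl, hux⟩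
      · rintro p rfl; rw [hNu]; rintro r (rfl | rfl | rfl) <;> simp
      · rintro a (rfl | rfl | rfl | rfl)
        · rw [hNv]; rintro r (rfl | rfl) <;> simp
        · rw [hNu]; rintro r (rfl | rfl | rfl) <;> simp
        · rw [hNw]; rintro r (rfl | rfl) <;> simp
        · rw [hNx]; rintro r rfl; simp
      · rw [finsum_mem_empty, finsum_mem_empty, fsum4 (f := fun a => wt G a) hvu' hvw'
          (Ne.symm hxv) huw' (Ne.symm hxu) (Ne.symm hxw), Set.ncard_singleton]
        have e4 : wt G x = 9 := by rw [wt_eq, hdx1']; rfl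
        rw [e1, e2, e3, e4]
        omega
    · -- deg x = 2
      have hdx2' : deg G x = 2 := by omega
      obtain ⟨z, hxz, hzu⟩ := exists_second hdx2' hux.symm
      have hNx : G.neighborSet x = {u, z} := nbhd_two hdx2' hux.symm hxz (Ne.symm hzu)
      have hzv : z ≠ v := fun h => hxnv (h ▸ hxz)
      have hzw : z ≠ w := fun h => hxnw (h ▸ hxz)
      have hzx : z ≠ x := hxz.ne'
      have hznv : ¬ G.Adj z v := not_adj_of_nbhd hNv (by simp [hzu, hzw])
      have hznu : ¬ G.Adj z u := not_adj_of_nbhd hNu (by simp [hzv, hzw, hzx])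
      have hznw : ¬ G.Adj z w := not_adj_of_nbhd hNw (by simp [hzu, hzv])
      have hNzA : G.neighborSet z ∩ ({v, u, w, x} : Set V) = {x} := by
        ext r
        constructor
        · rintro ⟨hadj, rfl | rfl | rfl | rfl⟩
          · exact absurd hadj hznv
          · exact absurd hadj hznu
          · exact absurd hadj hznw
          · rfl
        · rintro rfl; exact ⟨hxz.symm, by simp⟩
      have hdz1 : 1 ≤ deg G z := one_le_deg hxz.symm
      have hdz3 : deg G z ≤ 3 := hG.1 z
      refine master G hG ({v, u, w, x} : Set V) ({u} : Set V) ({z} : Set V) ⟨v, by simp⟩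
        (by simp) ?_ ?_ ?_ ?_ (hTN_of ?_) ?_
      · rintro p rfl q rfl; exact G.loopless.irrefl _
      · rintro a (rfl | rfl | rfl | rfl)
        · exact Or.inr ⟨u, rfl, hvu.symm⟩
        · exact Or.inl rfl
        · exact Or.inr ⟨u, rfl, huw⟩
        · exact Or.inr ⟨u, rfl, hux⟩
      · rintro p rfl; rw [hNu]; rintro r (rfl | rfl | rfl) <;> simp
      · rintro t rfl; simp [hzv, hzu, hzw, hzx]
      · rintro a (rfl | rfl | rfl | rfl)
        · rw [hNv]; rintro r (rfl | rfl) <;> simp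
        · rw [hNu]; rintro r (rfl | rfl | rfl) <;> simp
        · rw [hNw]; rintro r (rfl | rfl) <;> simp
        · rw [hNx]; rintro r (rfl | rfl) <;> simp
      · rw [finsum_mem_singleton, finsum_mem_singleton, fsum4 (f := fun a => wt G a) hvu'
          hvw' (Ne.symm hxv) huw' (Ne.symm hxu) (Ne.symm hxw), Set.ncard_singleton]
        have e4 : wt G x = 6 := by rw [wt_eq, hdx2']; rfl
        have hzz := dB_succ hNzA
        rw [e1, e2, e3, e4, wt_eq G z]
        set dz := deg G z with hdz
        rw [show (G.neighborSet z ∩ ({v, u, w, x} : Set V)ᶜ).ncard = dz - 1 from by omega]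
        interval_cases dz <;> simp [w']
lemma key_arith2 {a b : ℕ} (ha1 : 1 ≤ a) (ha3 : a ≤ 3) (hb1 : 1 ≤ b) (hb3 : b ≤ 3)
    (hnot : ¬(a = 1 ∧ b = 1)) :
    14 * 1 + (w' (a - 1) + w' (b - 1)) ≤ 6 + 5 + 5 + 6 + (w' a + w' b) := by
  interval_cases a <;> interval_cases b <;> simp_all [w']

lemma caseC (hG : MinimalCounterexample G) (v u w x : V)
    (hvu : G.Adj v u) (huw : G.Adj u w) (hwv : G.Adj w v)
    (hNv : G.neighborSet v = {u, w}) (h3u : deg G u = 3) (h3w : deg G w = 3)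
    (hux : G.Adj u x) (hxv : x ≠ v) (hxw : x ≠ w) (hdx : deg G x ≤ 2) : False := by
  have hvu' : v ≠ u := hvu.ne
  have huw' : u ≠ w := huw.ne
  have hvw' : v ≠ w := hwv.ne'
  have h2v : deg G v = 2 := by rw [deg, hNv, Set.ncard_pair huw']
  have hxu : x ≠ u := hux.ne'
  obtain ⟨y, hwy, hyu, hyv⟩ := exists_third h3w huw.symm hwv hvu'.symm
  have hyw : y ≠ w := hwy.ne'
  have hNu : G.neighborSet u = {v, w, x} :=
    nbhd_three h3u hvu.symm huw hux hvw' (Ne.symm hxv) (Ne.symm hxw)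
  have hNw : G.neighborSet w = {u, v, y} :=
    nbhd_three h3w huw.symm hwv hwy hvu'.symm (Ne.symm hyu) (Ne.symm hyv)
  have hxnw : ¬ G.Adj x w := fun h => c4 hG.2.1 hvu hux h hwv (Ne.symm hxv) huw'
  have hynu : ¬ G.Adj y u := fun h => c4 hG.2.1 hwv.symm hwy h hvu.symm (Ne.symm hyv) (Ne.symm huw')
  have hxy : x ≠ y := fun h => hxnw (by rw [h]; exact hwy.symm)
  have hxnv : ¬ G.Adj x v := not_adj_of_nbhd hNv (by simp [hxu, hxw])
  have hynv : ¬ G.Adj y v := not_adj_of_nbhd hNv (by simp [hyu, hyw])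
  have hxny : ¬ G.Adj x y := fun h => c4 hG.2.1 hux h hwy.symm huw.symm (Ne.symm hyu) hxw
  have hdy1 : 1 ≤ deg G y := one_le_deg hwy.symm
  have hdy3 : deg G y ≤ 3 := hG.1 y
  have hdx1 : 1 ≤ deg G x := one_le_deg hux.symm
  have e1 : wt G v = 6 := by rw [wt_eq, h2v]; rfl
  have e2 : wt G u = 5 := by rw [wt_eq, h3u]; rfl
  have e3 : wt G w = 5 := by rw [wt_eq, h3w]; rfl
  have hNyA : G.neighborSet y ∩ ({v, u, w, x} : Set V) = {w} := by
    ext r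
    constructor
    · rintro ⟨hadj, rfl | rfl | rfl | rfl⟩
      · exact absurd hadj hynv
      · exact absurd hadj hynu
      · rfl
      · exact absurd hadj.symm hxny
    · rintro rfl; exact ⟨hwy.symm, by simp⟩
  by_cases hdx1' : deg G x = 1
  · -- A = {v,u,w,x}, P = {u}, T = {y}
    have hNx : G.neighborSet x = {u} := nbhd_one hdx1' hux.symm
    refine master G hG ({v, u, w, x} : Set V) ({u} : Set V) ({y} : Set V) ⟨v, by simp⟩
      (by simp) ?_ ?_ ?_ ?_ (hTN_of ?_) ?_
    · rintro p rfl q rfl; exact G.loopless.irrefl _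
    · rintro a (rfl | rfl | rfl | rfl)
      · exact Or.inr ⟨u, rfl, hvu.symm⟩
      · exact Or.inl rfl
      · exact Or.inr ⟨u, rfl, huw⟩
      · exact Or.inr ⟨u, rfl, hux⟩
    · rintro p rfl; rw [hNu]; rintro r (rfl | rfl | rfl) <;> simp
    · rintro t rfl; simp [hyv, hyu, hyw, Ne.symm hxy]
    · rintro a (rfl | rfl | rfl | rfl)
      · rw [hNv]; rintro r (rfl | rfl) <;> simp
      · rw [hNu]; rintro r (rfl | rfl | rfl) <;> simp
      · rw [hNw]; rintro r (rfl | rfl | rfl) <;> simp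
      · rw [hNx]; rintro r rfl; simp
    · rw [finsum_mem_singleton, finsum_mem_singleton, fsum4 (f := fun a => wt G a) hvu'
        hvw' (Ne.symm hxv) huw' (Ne.symm hxu) (Ne.symm hxw), Set.ncard_singleton]
      have e4 : wt G x = 9 := by rw [wt_eq, hdx1']; rfl
      have hyy := dB_succ hNyA
      rw [e1, e2, e3, e4, wt_eq G y]
      set dy := deg G y with hdy
      rw [show (G.neighborSet y ∩ ({v, u, w, x} : Set V)ᶜ).ncard = dy - 1 from by omega]
      interval_cases dy <;> simp [w']
  · -- deg x = 2
    have hdx2' : deg G x = 2 := by omega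
    obtain ⟨z, hxz, hzu⟩ := exists_second hdx2' hux.symm
    have hNx : G.neighborSet x = {u, z} := nbhd_two hdx2' hux.symm hxz (Ne.symm hzu)
    have hzv : z ≠ v := fun h => hxnv (h ▸ hxz)
    have hzw : z ≠ w := fun h => hxnw (h ▸ hxz)
    have hzy : z ≠ y := fun h => hxny (h ▸ hxz)
    have hzx : z ≠ x := hxz.ne'
    have hznv : ¬ G.Adj z v := not_adj_of_nbhd hNv (by simp [hzu, hzw])
    have hznu : ¬ G.Adj z u := not_adj_of_nbhd hNu (by simp [hzv, hzw, hzx])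
    have hznw : ¬ G.Adj z w := not_adj_of_nbhd hNw (by simp [hzu, hzv, hzy])
    have hdz1 : 1 ≤ deg G z := one_le_deg hxz.symm
    have hdz3 : deg G z ≤ 3 := hG.1 z
    have e4 : wt G x = 6 := by rw [wt_eq, hdx2']; rfl
    by_cases hboth : deg G y = 1 ∧ deg G z = 1
    · -- A = {v,u,w,x,y,z}, P = {x,w}, T = ∅
      have hNy : G.neighborSet y = {w} := nbhd_one hboth.1 hwy.symm
      have hNz : G.neighborSet z = {x} := nbhd_one hboth.2 hxz.symm
      refine master G hG ({v, u, w, x, y, z} : Set V) ({x, w} : Set V) (∅ : Set V)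
        ⟨v, by simp⟩ ?_ ?_ ?_ ?_ (by simp) (hTN_of ?_) ?_
      · rintro p (rfl | rfl) <;> simp
      · rintro p (rfl | rfl) q (rfl | rfl)
        · exact G.loopless.irrefl _
        · exact hxnw
        · exact fun h => hxnw h.symm
        · exact G.loopless.irrefl _
      · rintro a (rfl | rfl | rfl | rfl | rfl | rfl)
        · exact Or.inr ⟨w, Or.inr rfl, hwv⟩
        · exact Or.inr ⟨x, Or.inl rfl, hux.symm⟩
        · exact Or.inl (Or.inr rfl)
        · exact Or.inl (Or.inl rfl)
        · exact Or.inr ⟨w, Or.inr rfl, hwy⟩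
        · exact Or.inr ⟨x, Or.inl rfl, hxz⟩
      · rintro p (rfl | rfl)
        · rw [hNx]; rintro r (rfl | rfl) <;> simp
        · rw [hNw]; rintro r (rfl | rfl | rfl) <;> simp
      · rintro a (rfl | rfl | rfl | rfl | rfl | rfl)
        · rw [hNv]; rintro r (rfl | rfl) <;> simp
        · rw [hNu]; rintro r (rfl | rfl | rfl) <;> simp
        · rw [hNw]; rintro r (rfl | rfl | rfl) <;> simp
        · rw [hNx]; rintro r (rfl | rfl) <;> simp
        · rw [hNy]; rintro r rfl; simp
        · rw [hNz]; rintro r rfl; simp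
      · rw [finsum_mem_empty, finsum_mem_empty, fsum6 (f := fun a => wt G a) hvu' hvw'
          (Ne.symm hxv) (Ne.symm hyv) (Ne.symm hzv) huw' (Ne.symm hxu) (Ne.symm hyu)
          (Ne.symm hzu) (Ne.symm hxw) (Ne.symm hyw) (Ne.symm hzw) hxy (Ne.symm hzx)
          (Ne.symm hzy), Set.ncard_pair hxw]
        have e5 : wt G y = 9 := by rw [wt_eq, hboth.1]; rfl
        have e6 : wt G z = 9 := by rw [wt_eq, hboth.2]; rfl
        rw [e1, e2, e3, e4, e5, e6]
        omega
    · -- A = {v,u,w,x}, P = {u}, T = {y,z}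
      have hNzA : G.neighborSet z ∩ ({v, u, w, x} : Set V) = {x} := by
        ext r
        constructor
        · rintro ⟨hadj, rfl | rfl | rfl | rfl⟩
          · exact absurd hadj hznv
          · exact absurd hadj hznu
          · exact absurd hadj hznw
          · rfl
        · rintro rfl; exact ⟨hxz.symm, by simp⟩
      refine master G hG ({v, u, w, x} : Set V) ({u} : Set V) ({y, z} : Set V)
        ⟨v, by simp⟩ (by simp) ?_ ?_ ?_ ?_ (hTN_of ?_) ?_
      · rintro p rfl q rfl; exact G.loopless.irrefl _
      · rintro a (rfl | rfl | rfl | rfl)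
        · exact Or.inr ⟨u, rfl, hvu.symm⟩
        · exact Or.inl rfl
        · exact Or.inr ⟨u, rfl, huw⟩
        · exact Or.inr ⟨u, rfl, hux⟩
      · rintro p rfl; rw [hNu]; rintro r (rfl | rfl | rfl) <;> simp
      · rintro t (rfl | rfl)
        · simp [hyv, hyu, hyw, Ne.symm hxy]
        · simp [hzv, hzu, hzw, hzx]
      · rintro a (rfl | rfl | rfl | rfl)
        · rw [hNv]; rintro r (rfl | rfl) <;> simp
        · rw [hNu]; rintro r (rfl | rfl | rfl) <;> simp
        · rw [hNw]; rintro r (rfl | rfl | rfl) <;> simp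
        · rw [hNx]; rintro r (rfl | rfl) <;> simp
      · rw [finsum_mem_pair (Ne.symm hzy), finsum_mem_pair (Ne.symm hzy),
          fsum4 (f := fun a => wt G a) hvu' hvw' (Ne.symm hxv) huw' (Ne.symm hxu)
          (Ne.symm hxw), Set.ncard_singleton]
        have hyy := dB_succ hNyA
        have hzz := dB_succ hNzA
        rw [e1, e2, e3, e4, wt_eq G y, wt_eq G z]
        rw [show (G.neighborSet y ∩ ({v, u, w, x} : Set V)ᶜ).ncard = deg G y - 1 from by omega,
          show (G.neighborSet z ∩ ({v, u, w, x} : Set V)ᶜ).ncard = deg G z - 1 from by omega]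
        linarith [key_arith2 hdy1 hdy3 hdz1 hdz3 hboth]

lemma case3a (hG : MinimalCounterexample G) (v u w x y : V)
    (hvu : G.Adj v u) (huw : G.Adj u w) (hwv : G.Adj w v)
    (hNv : G.neighborSet v = {u, w}) (h3u : deg G u = 3) (h3w : deg G w = 3)
    (hux : G.Adj u x) (hxv : x ≠ v) (hxw : x ≠ w)
    (hwy : G.Adj w y) (hyu : y ≠ u) (hyv : y ≠ v)
    (hdx : deg G x = 3) (hdy : deg G y = 3) : False := by
  have hvu' : v ≠ u := hvu.ne
  have huw' : u ≠ w := huw.ne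
  have hvw' : v ≠ w := hwv.ne'
  have h2v : deg G v = 2 := by rw [deg, hNv, Set.ncard_pair huw']
  have hxu : x ≠ u := hux.ne'
  have hyw : y ≠ w := hwy.ne'
  have hNu : G.neighborSet u = {v, w, x} :=
    nbhd_three h3u hvu.symm huw hux hvw' (Ne.symm hxv) (Ne.symm hxw)
  have hNw : G.neighborSet w = {u, v, y} :=
    nbhd_three h3w huw.symm hwv hwy hvu'.symm (Ne.symm hyu) (Ne.symm hyv)
  have hxnw : ¬ G.Adj x w := fun h => c4 hG.2.1 hvu hux h hwv (Ne.symm hxv) huw'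
  have hynu : ¬ G.Adj y u := fun h => c4 hG.2.1 hwv.symm hwy h hvu.symm (Ne.symm hyv) (Ne.symm huw')
  have hxy : x ≠ y := fun h => hxnw (by rw [h]; exact hwy.symm)
  have hxnv : ¬ G.Adj x v := not_adj_of_nbhd hNv (by simp [hxu, hxw])
  have hynv : ¬ G.Adj y v := not_adj_of_nbhd hNv (by simp [hyu, hyw])
  have hNxA : G.neighborSet x ∩ ({v, u, w} : Set V) = {u} := by
    ext r
    constructor
    · rintro ⟨hadj, rfl | rfl | rfl⟩
      · exact absurd hadj hxnv
      · rfl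
      · exact absurd hadj hxnw
    · rintro rfl; exact ⟨hux.symm, by simp⟩
  have hNyA : G.neighborSet y ∩ ({v, u, w} : Set V) = {w} := by
    ext r
    constructor
    · rintro ⟨hadj, rfl | rfl | rfl⟩
      · exact absurd hadj hynv
      · exact absurd hadj hynu
      · rfl
    · rintro rfl; exact ⟨hwy.symm, by simp⟩
  refine master G hG ({v, u, w} : Set V) ({v} : Set V) ({x, y} : Set V) ⟨v, by simp⟩
    (by simp) ?_ ?_ ?_ ?_ (hTN_of ?_) ?_
  · rintro p rfl q rfl; exact G.loopless.irrefl _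
  · rintro a (rfl | rfl | rfl)
    · exact Or.inl rfl
    · exact Or.inr ⟨v, rfl, hvu⟩
    · exact Or.inr ⟨v, rfl, hwv.symm⟩
  · rintro p rfl; rw [hNv]; rintro r (rfl | rfl) <;> simp
  · rintro t (rfl | rfl)
    · simp [hxv, hxu, hxw]
    · simp [hyv, hyu, hyw]
  · rintro a (rfl | rfl | rfl)
    · rw [hNv]; rintro r (rfl | rfl) <;> simp
    · rw [hNu]; rintro r (rfl | rfl | rfl) <;> simp
    · rw [hNw]; rintro r (rfl | rfl | rfl) <;> simp
  · rw [finsum_mem_pair hxy, finsum_mem_pair hxy,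
      fsum3 (f := fun a => wt G a) hvu' hvw' huw', Set.ncard_singleton]
    have hxx := dB_succ hNxA
    have hyy := dB_succ hNyA
    have e1 : wt G v = 6 := by rw [wt_eq, h2v]; rfl
    have e2 : wt G u = 5 := by rw [wt_eq, h3u]; rfl
    have e3 : wt G w = 5 := by rw [wt_eq, h3w]; rfl
    have e4 : wt G x = 5 := by rw [wt_eq, hdx]; rfl
    have e5 : wt G y = 5 := by rw [wt_eq, hdy]; rfl
    have e6 : w' ((G.neighborSet x ∩ ({v, u, w} : Set V)ᶜ).ncard) = 6 := by
      rw [show (G.neighborSet x ∩ ({v, u, w} : Set V)ᶜ).ncard = 2 from by omega]; rfl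
    have e7 : w' ((G.neighborSet y ∩ ({v, u, w} : Set V)ᶜ).ncard) = 6 := by
      rw [show (G.neighborSet y ∩ ({v, u, w} : Set V)ᶜ).ncard = 2 from by omega]; rfl
    rw [e1, e2, e3, e4, e5, e6, e7]
    omega
end Cases

/-- A minimal counterexample contains no triangle having a vertex of degree 2. -/
theorem no_triangle_with_deg_two_vertex {V : Type*} [Fintype V] (G : SimpleGraph V)
    (hG : MinimalCounterexample G) :
    ¬ ∃ v u w : V, G.Adj v u ∧ G.Adj u w ∧ G.Adj w v ∧ deg G v = 2 := by
  rintro ⟨v, u, w, hvu, huw, hwv, hv2⟩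
  have hvu' : v ≠ u := hvu.ne
  have huw' : u ≠ w := huw.ne
  have hvw' : v ≠ w := hwv.ne'
  have hNv : G.neighborSet v = {u, w} := nbhd_two hv2 hvu hwv.symm huw'
  have hNv' : G.neighborSet v = {w, u} := by rw [hNv, Set.pair_comm]
  have hdu2 : 2 ≤ deg G u := two_le_deg hvu.symm huw hvw'
  have hdu3 : deg G u ≤ 3 := hG.1 u
  have hdw2 : 2 ≤ deg G w := two_le_deg huw.symm hwv hvu'.symm
  have hdw3 : deg G w ≤ 3 := hG.1 w
  by_cases h3u : deg G u = 3
  · by_cases h3w : deg G w = 3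
    · obtain ⟨x, hux, hxv, hxw⟩ := exists_third h3u hvu.symm huw hvw'
      obtain ⟨y, hwy, hyu, hyv⟩ := exists_third h3w huw.symm hwv hvu'.symm
      by_cases hdx : deg G x ≤ 2
      · exact caseC hG v u w x hvu huw hwv hNv h3u h3w hux hxv hxw hdx
      · by_cases hdy : deg G y ≤ 2
        · exact caseC hG v w u y hwv.symm huw.symm hvu.symm hNv' h3w h3u hwy hyv hyu hdy
        · have hdx3 : deg G x = 3 := by have := hG.1 x; omega
          have hdy3 : deg G y = 3 := by have := hG.1 y; omega
          exact case3a hG v u w x y hvu huw hwv hNv h3u h3w hux hxv hxw hwy hyu hyv hdx3 hdy3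
    · have h2w : deg G w = 2 := by omega
      exact caseB hG v u w hvu huw hwv hNv h3u h2w
  · have h2u : deg G u = 2 := by omega
    by_cases h3w : deg G w = 3
    · exact caseB hG v w u hwv.symm huw.symm hvu.symm hNv' h3w h2u
    · have h2w : deg G w = 2 := by omega
      exact caseA hG v u w hvu huw hwv hNv h2u h2w
end

section
/- If G is a minimal counterexample (as defined in the context), then G contains no path v–u–w such that v, u, w all have degree 3, v has a neighbor of degree 1, and u has no neighbor of degree 1. -/
open Set

section Aux
variable {V : Type*} [Fintype V]

open Classical in
/-- every finite graph has an independent dominating set -/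
lemma exists_IDS (G : SimpleGraph V) : ∃ S : Set V, IsIndepDomSet G S := by
  classical
  -- take maximal independent finset
  have hne : (Finset.univ.powerset.filter
      (fun A : Finset V => ∀ p ∈ A, ∀ q ∈ A, ¬ G.Adj p q)).Nonempty := by
    refine ⟨∅, ?_⟩
    simp
  obtain ⟨A, hA, hmax⟩ := Finset.exists_max_image _ (fun A => A.card) hne
  simp only [Finset.mem_filter] at hA
  refine ⟨↑A, ?_, ?_⟩
  · intro v hv
    by_contra hno
    push_neg at hno
    have hindep : ∀ p ∈ insert v A, ∀ q ∈ insert v A, ¬ G.Adj p q := by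
      intro p hp q hq
      simp only [Finset.mem_insert] at hp hq
      rcases hp with rfl | hp <;> rcases hq with rfl | hq
      · exact G.loopless.irrefl _
      · intro h; exact hno q hq h.symm
      · intro h; exact hno p hp h
      · exact hA.2 p hp q hq
    have hmem : insert v A ∈ Finset.univ.powerset.filter
        (fun A : Finset V => ∀ p ∈ A, ∀ q ∈ A, ¬ G.Adj p q) := by
      simp only [Finset.mem_filter, Finset.mem_powerset]
      exact ⟨Finset.subset_univ _, hindep⟩
    have := hmax _ hmem
    have hv' : v ∉ A := by simpa using hv
    have := Finset.card_insert_of_notMem hv' ▸ this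
    omega
  · intro p hp q hq
    exact hA.2 p hp q hq

omit [Fintype V] in
lemma indepDomNum_le (G : SimpleGraph V) {S : Set V} (h : IsIndepDomSet G S) :
    indepDomNum G ≤ S.ncard :=
  Nat.sInf_le ⟨S, h, rfl⟩

lemma indepDomNum_attained (G : SimpleGraph V) :
    ∃ S : Set V, IsIndepDomSet G S ∧ S.ncard = indepDomNum G := by
  obtain ⟨S, hS⟩ := exists_IDS G
  have : {n | ∃ S : Set V, IsIndepDomSet G S ∧ S.ncard = n}.Nonempty := ⟨_, S, hS, rfl⟩
  exact Nat.sInf_mem this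

end Aux
section Key
variable {V : Type*} [Fintype V] [DecidableEq V]

/-- abstract weight function -/
def w0 (d : ℕ) : ℕ := if d = 0 then 14 else if d = 1 then 9 else if d = 2 then 6 else 5

omit [Fintype V] in
lemma wt_eq_w0 (G : SimpleGraph V) (v : V) : wt G v = w0 (deg G v) := rfl

lemma w0_ge (n : ℕ) : 5 ≤ w0 n := by unfold w0; split_ifs <;> omega
lemma w0_le (n : ℕ) : w0 n ≤ 14 := by unfold w0; split_ifs <;> omega
lemma w0_pred1 (n : ℕ) (h : 1 ≤ n) : w0 (n-1) ≤ w0 n + 5 := by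
  unfold w0; split_ifs <;> omega
lemma w0_pred2 (n : ℕ) (h : 2 ≤ n) : w0 (n-1) ≤ w0 n + 3 := by
  unfold w0; split_ifs <;> omega
lemma w0_pred3 (n : ℕ) (h : 3 ≤ n) : w0 (n-1) ≤ w0 n + 1 := by
  unfold w0; split_ifs <;> omega

lemma Hne (G : SimpleGraph V) (D : Set V) (hD : D.Nonempty) :
    (⊤ : G.Subgraph).deleteVerts D ≠ ⊤ := by
  intro h
  obtain ⟨d, hd⟩ := hD
  have h2 := congrArg SimpleGraph.Subgraph.verts h
  rw [SimpleGraph.Subgraph.deleteVerts_verts, SimpleGraph.Subgraph.verts_top] at h2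
  have : d ∈ (Set.univ : Set V) \ D := h2.symm ▸ Set.mem_univ d
  exact this.2 hd

lemma coe_adj_iff (G : SimpleGraph V) (D : Set V)
    (p q : ↥((⊤ : G.Subgraph).deleteVerts D).verts) :
    ((⊤ : G.Subgraph).deleteVerts D).coe.Adj p q ↔ G.Adj p.val q.val := by
  constructor
  · intro h
    have := ((⊤ : G.Subgraph).deleteVerts D).coe_adj_sub p q h
    exact this
  · intro h
    show ((⊤ : G.Subgraph).deleteVerts D).Adj p.val q.val
    rw [SimpleGraph.Subgraph.deleteVerts_adj]
    exact ⟨trivial, p.2.2, trivial, q.2.2, h⟩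

/-- degree in the vertex-deleted subgraph -/
lemma deg_delete (G : SimpleGraph V) (D : Set V)
    (v : ↥((⊤ : G.Subgraph).deleteVerts D).verts) :
    deg ((⊤ : G.Subgraph).deleteVerts D).coe v = ((G.neighborSet v.val) \ D).ncard := by
  unfold deg
  have himg : Subtype.val '' (((⊤ : G.Subgraph).deleteVerts D).coe.neighborSet v)
      = (G.neighborSet v.val) \ D := by
    ext y
    simp only [Set.mem_image, SimpleGraph.mem_neighborSet, Set.mem_diff]
    constructor
    · rintro ⟨y', hy', rfl⟩
      exact ⟨(coe_adj_iff G D v y').mp hy', y'.2.2⟩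
    · rintro ⟨hadj, hyD⟩
      have hy : y ∈ ((⊤ : G.Subgraph).deleteVerts D).verts := by
        rw [SimpleGraph.Subgraph.deleteVerts_verts]; exact ⟨trivial, hyD⟩
      exact ⟨⟨y, hy⟩, (coe_adj_iff G D v ⟨y, hy⟩).mpr hadj, rfl⟩
  rw [← himg, Set.ncard_image_of_injective _ Subtype.val_injective]

lemma wtGraph_eq_sum (G : SimpleGraph V) :
    wtGraph G = ∑ v : V, w0 (deg G v) := by
  unfold wtGraph wtSet
  rw [finsum_mem_univ, finsum_eq_sum_of_fintype]
  exact Finset.sum_congr rfl (fun v _ => rfl)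

lemma wtGraph_delete_eq (G : SimpleGraph V) (D : Finset V) :
    wtGraph ((⊤ : G.Subgraph).deleteVerts (D : Set V)).coe
      = ∑ v ∈ Finset.univ \ D, w0 ((G.neighborSet v \ (D : Set V)).ncard) := by
  classical
  unfold wtGraph wtSet
  rw [finsum_mem_univ]
  have h1 : ∀ v : ↥((⊤ : G.Subgraph).deleteVerts (D : Set V)).verts,
      wt ((⊤ : G.Subgraph).deleteVerts (D : Set V)).coe v
        = w0 ((G.neighborSet v.val \ (D : Set V)).ncard) := by
    intro v
    rw [wt_eq_w0, deg_delete]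
  rw [finsum_congr h1]
  rw [finsum_set_coe_eq_finsum_mem
    (f := fun x => w0 ((G.neighborSet x \ (D : Set V)).ncard))]
  have hverts : ((⊤ : G.Subgraph).deleteVerts (D : Set V)).verts
      = ((Finset.univ \ D : Finset V) : Set V) := by
    rw [SimpleGraph.Subgraph.deleteVerts_verts]
    ext y; simp
  rw [hverts, finsum_mem_coe_finset]

/-- The master deletion lemma. -/
lemma key_delete (G : SimpleGraph V) (hG : MinimalCounterexample G)
    (D S₀ : Set V) (hS₀D : S₀ ⊆ D) (hDne : D.Nonempty)
    (hindep : ∀ p ∈ S₀, ∀ q ∈ S₀, ¬ G.Adj p q)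
    (hnb : ∀ p ∈ S₀, ∀ q, G.Adj p q → q ∈ D)
    (hdom : ∀ d ∈ D, d ∈ S₀ ∨ ∃ p ∈ S₀, G.Adj p d)
    (hw : 14 * S₀.ncard + wtGraph ((⊤ : G.Subgraph).deleteVerts D).coe ≤ wtGraph G) :
    False := by
  classical
  set H := (⊤ : G.Subgraph).deleteVerts D with hH
  haveI : Fintype ↥H.verts := (Set.toFinite _).fintype
  obtain ⟨S', hS', hScard⟩ := indepDomNum_attained H.coe
  set S : Set V := (Subtype.val '' S') ∪ S₀ with hSdef
  have hSimage_D : ∀ y ∈ Subtype.val '' S', y ∉ D := by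
    rintro y ⟨y', _, rfl⟩
    exact y'.2.2
  have hIDS : IsIndepDomSet G S := by
    constructor
    · intro v hv
      by_cases hvD : v ∈ D
      · rcases hdom v hvD with h | ⟨p, hp, hpv⟩
        · exact absurd (Set.mem_union_right _ h) hv
        · exact ⟨p, Set.mem_union_right _ hp, hpv⟩
      · have hvH : v ∈ H.verts := by
          rw [hH, SimpleGraph.Subgraph.deleteVerts_verts]; exact ⟨trivial, hvD⟩
        have hvS' : (⟨v, hvH⟩ : ↥H.verts) ∉ S' := by
          intro hmem
          exact hv (Set.mem_union_left _ ⟨⟨v, hvH⟩, hmem, rfl⟩)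
        obtain ⟨u', hu', hadj⟩ := hS'.1 _ hvS'
        exact ⟨u'.val, Set.mem_union_left _ ⟨u', hu', rfl⟩,
          (coe_adj_iff G D u' ⟨v, hvH⟩).mp hadj⟩
    · intro p hp q hq hadj
      rcases hp with hp | hp <;> rcases hq with hq | hq
      · obtain ⟨p', hp', rfl⟩ := hp
        obtain ⟨q', hq', rfl⟩ := hq
        exact hS'.2 p' hp' q' hq' ((coe_adj_iff G D p' q').mpr hadj)
      · exact hSimage_D _ hp (hnb q hq p hadj.symm)
      · exact hSimage_D _ hq (hnb p hp q hadj)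
      · exact hindep p hp q hq hadj
  have hcard : S.ncard ≤ indepDomNum H.coe + S₀.ncard := by
    calc S.ncard ≤ (Subtype.val '' S').ncard + S₀.ncard := Set.ncard_union_le _ _
    _ = S'.ncard + S₀.ncard := by
        rw [Set.ncard_image_of_injective _ Subtype.val_injective]
    _ = indepDomNum H.coe + S₀.ncard := by rw [hScard]
  have h1 : indepDomNum G ≤ indepDomNum H.coe + S₀.ncard :=
    le_trans (indepDomNum_le G hIDS) hcard
  have h2 : 14 * indepDomNum H.coe ≤ wtGraph H.coe :=
    hG.2.2.2 H (Hne G D hDne)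
  have h3 := hG.2.2.1
  omega

/-- reduce the weight inequality to the affected set -/
lemma wkey (G : SimpleGraph V) (D A : Finset V) (k : ℕ)
    (hAD : ∀ a ∈ A, a ∉ D)
    (hout : ∀ h : V, h ∉ A → h ∉ D → G.neighborSet h ∩ (D : Set V) = ∅)
    (htarget : 14 * k + ∑ h ∈ A, w0 ((G.neighborSet h \ (D : Set V)).ncard)
      ≤ (∑ h ∈ A, w0 (deg G h)) + ∑ h ∈ D, w0 (deg G h)) :
    14 * k + wtGraph ((⊤ : G.Subgraph).deleteVerts (D : Set V)).coe ≤ wtGraph G := by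
  classical
  rw [wtGraph_delete_eq, wtGraph_eq_sum]
  have hsplit : ∑ v : V, w0 (deg G v)
      = (∑ v ∈ Finset.univ \ D, w0 (deg G v)) + ∑ v ∈ D, w0 (deg G v) :=
    (Finset.sum_sdiff (Finset.subset_univ D)).symm
  have hA_sub : A ⊆ Finset.univ \ D := by
    intro a ha; rw [Finset.mem_sdiff]; exact ⟨Finset.mem_univ a, hAD a ha⟩
  have hsplit2 : ∑ v ∈ Finset.univ \ D, w0 ((G.neighborSet v \ (D : Set V)).ncard)
      = (∑ v ∈ (Finset.univ \ D) \ A, w0 ((G.neighborSet v \ (D : Set V)).ncard))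
        + ∑ v ∈ A, w0 ((G.neighborSet v \ (D : Set V)).ncard) :=
    (Finset.sum_sdiff hA_sub).symm
  have hsplit3 : ∑ v ∈ Finset.univ \ D, w0 (deg G v)
      = (∑ v ∈ (Finset.univ \ D) \ A, w0 (deg G v)) + ∑ v ∈ A, w0 (deg G v) :=
    (Finset.sum_sdiff hA_sub).symm
  have hsame : ∀ v ∈ (Finset.univ \ D) \ A,
      w0 ((G.neighborSet v \ (D : Set V)).ncard) = w0 (deg G v) := by
    intro v hv
    rw [Finset.mem_sdiff, Finset.mem_sdiff] at hv
    have h0 := hout v hv.2 hv.1.2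
    have : G.neighborSet v \ (D : Set V) = G.neighborSet v := by
      exact sdiff_eq_left.mpr (Set.disjoint_iff_inter_eq_empty.mpr h0)
    rw [this]; rfl
  rw [Finset.sum_congr rfl hsame] at hsplit2
  omega
end Key
section Helpers
variable {V : Type*}

lemma sum2 [DecidableEq V] (f : V → ℕ) (a b : V) (hab : a ≠ b) :
    ∑ h ∈ ({a, b} : Finset V), f h = f a + f b := by
  rw [Finset.sum_insert (by simp [hab]), Finset.sum_singleton]

lemma sum3 [DecidableEq V] (f : V → ℕ) (a b c : V) (hab : a ≠ b) (hac : a ≠ c)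
    (hbc : b ≠ c) :
    ∑ h ∈ ({a, b, c} : Finset V), f h = f a + f b + f c := by
  rw [Finset.sum_insert (by simp [hab, hac]), sum2 f b c hbc]; ring

lemma sum4 [DecidableEq V] (f : V → ℕ) (a b c d : V) (hab : a ≠ b) (hac : a ≠ c)
    (had : a ≠ d) (hbc : b ≠ c) (hbd : b ≠ d) (hcd : c ≠ d) :
    ∑ h ∈ ({a, b, c, d} : Finset V), f h = f a + f b + f c + f d := by
  rw [Finset.sum_insert (by simp [hab, hac, had]), sum3 f b c d hbc hbd hcd]; ring

lemma sum5 [DecidableEq V] (f : V → ℕ) (a b c d e : V) (hab : a ≠ b) (hac : a ≠ c)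
    (had : a ≠ d) (hae : a ≠ e) (hbc : b ≠ c) (hbd : b ≠ d) (hbe : b ≠ e)
    (hcd : c ≠ d) (hce : c ≠ e) (hde : d ≠ e) :
    ∑ h ∈ ({a, b, c, d, e} : Finset V), f h = f a + f b + f c + f d + f e := by
  rw [Finset.sum_insert (by simp [hab, hac, had, hae]),
    sum4 f b c d e hbc hbd hbe hcd hce hde]; ring

lemma ncard1_mem {s : Set V} {p : V} (h1 : s.ncard = 1) (hp : p ∈ s) : s = {p} := by
  obtain ⟨a, rfl⟩ := Set.ncard_eq_one.mp h1
  rw [Set.mem_singleton_iff] at hp; subst hp; rfl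

lemma ncard2_mem {s : Set V} {p : V} (h2 : s.ncard = 2) (hp : p ∈ s) :
    ∃ q, q ≠ p ∧ s = {p, q} := by
  obtain ⟨a, b, hab, rfl⟩ := Set.ncard_eq_two.mp h2
  rcases hp with rfl | hp
  · exact ⟨b, fun h => hab h.symm, rfl⟩
  · rw [Set.mem_singleton_iff] at hp; subst hp
    exact ⟨a, hab, Set.pair_comm _ _⟩

lemma ncard3_mem2 {s : Set V} {p q : V} (h3 : s.ncard = 3) (hp : p ∈ s) (hq : q ∈ s)
    (hpq : p ≠ q) : ∃ r, r ≠ p ∧ r ≠ q ∧ s = {p, q, r} := by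
  obtain ⟨a, b, c, hab, hac, hbc, rfl⟩ := Set.ncard_eq_three.mp h3
  have hperm : ∀ y : V, y ∈ ({a,b,c} : Set V) ↔ y = a ∨ y = b ∨ y = c := by
    intro y; simp only [Set.mem_insert_iff, Set.mem_singleton_iff]
  simp only [Set.mem_insert_iff, Set.mem_singleton_iff] at hp hq
  rcases hp with rfl | rfl | rfl <;> rcases hq with rfl | rfl | rfl <;>
      [skip; skip; skip; skip; skip; skip; skip; skip; skip]
  · exact absurd rfl hpq
  · exact ⟨c, fun h => hac h.symm, fun h => hbc h.symm, rfl⟩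
  · refine ⟨b, fun h => hab h.symm, fun h => hbc h, ?_⟩
    ext y; rw [hperm]; simp only [Set.mem_insert_iff, Set.mem_singleton_iff]; tauto
  · refine ⟨c, fun h => hbc h.symm, fun h => hac h.symm, ?_⟩
    ext y; rw [hperm]; simp only [Set.mem_insert_iff, Set.mem_singleton_iff]; tauto
  · exact absurd rfl hpq
  · refine ⟨a, fun h => hab h, fun h => hac h, ?_⟩
    ext y; rw [hperm]; simp only [Set.mem_insert_iff, Set.mem_singleton_iff]; tauto
  · refine ⟨b, fun h => hbc h, fun h => hab h.symm, ?_⟩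
    ext y; rw [hperm]; simp only [Set.mem_insert_iff, Set.mem_singleton_iff]; tauto
  · refine ⟨a, fun h => hac h, fun h => hab h, ?_⟩
    ext y; rw [hperm]; simp only [Set.mem_insert_iff, Set.mem_singleton_iff]; tauto
  · exact absurd rfl hpq

lemma ncard3_mem1 {s : Set V} {p : V} (h3 : s.ncard = 3) (hp : p ∈ s) :
    ∃ q r, q ≠ p ∧ r ≠ p ∧ q ≠ r ∧ s = {p, q, r} := by
  obtain ⟨a, b, c, hab, hac, hbc, rfl⟩ := Set.ncard_eq_three.mp h3
  simp only [Set.mem_insert_iff, Set.mem_singleton_iff] at hp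
  rcases hp with rfl | rfl | rfl
  · exact ⟨b, c, fun h => hab h.symm, fun h => hac h.symm, hbc, rfl⟩
  · refine ⟨a, c, hab, fun h => hbc h.symm, hac, ?_⟩
    ext y; simp only [Set.mem_insert_iff, Set.mem_singleton_iff]; tauto
  · refine ⟨a, b, hac, hbc, hab, ?_⟩
    ext y; simp only [Set.mem_insert_iff, Set.mem_singleton_iff]; tauto

lemma ncard_sdiff_inter (s t : Set V) (hs : s.Finite) :
    (s \ t).ncard = s.ncard - (s ∩ t).ncard := by
  have h1 : s \ t = s \ (s ∩ t) := by
    ext y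
    simp only [Set.mem_diff, Set.mem_inter_iff]
    tauto
  rw [h1, Set.ncard_diff Set.inter_subset_left (hs.inter_of_left t)]

lemma deg_pos {G : SimpleGraph V} {a b : V} [Fintype V] (h : G.Adj a b) :
    1 ≤ deg G b :=
  (Set.ncard_pos (Set.toFinite _)).mpr ⟨a, h.symm⟩

end Helpers
section BadCase
variable {V : Type*} [Fintype V] [DecidableEq V]

lemma good_arith (dz d1 d2 : ℕ) (hz2 : 2 ≤ dz) (hz3 : dz ≤ 3)
    (h11 : 1 ≤ d1) (h13 : d1 ≤ 3) (h21 : 1 ≤ d2) (h23 : d2 ≤ 3)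
    (hg1 : ¬(d1 = 1 ∧ d2 ≤ 2)) (hg2 : ¬(d2 = 1 ∧ d1 ≤ 2)) :
    14 + (w0 2 + w0 (dz - 1) + w0 (d1 - 1) + w0 (d2 - 1))
      ≤ w0 3 + w0 dz + w0 d1 + w0 d2 + 24 := by
  interval_cases dz <;> interval_cases d1 <;> interval_cases d2 <;>
    revert hg1 hg2 <;> norm_num [w0]

lemma bad_case (G : SimpleGraph V) (hG : MinimalCounterexample G)
    (v u x a t1 t2 : V)
    (hvu : G.Adj v u) (hvx : G.Adj v x) (hva : G.Adj v a)
    (hat1 : G.Adj a t1) (hat2 : G.Adj a t2)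
    (hdv : deg G v = 3) (hdx : deg G x = 1) (hdu : deg G u = 3) (hda : deg G a = 3)
    (hdt1 : deg G t1 = 1) (hdt2 : deg G t2 ≤ 2)
    (hAdjv : ∀ {y : V}, G.Adj v y → y = x ∨ y = u ∨ y = a)
    (hAdjx : ∀ {y : V}, G.Adj x y → y = v)
    (hAdja : ∀ {y : V}, G.Adj a y → y = v ∨ y = t1 ∨ y = t2)
    (hnua : ¬ G.Adj u a) (hnut1 : ¬ G.Adj u t1) (hnut2 : ¬ G.Adj u t2)
    (dxv : x ≠ v) (dxa : x ≠ a) (dxt1 : x ≠ t1) (dxt2 : x ≠ t2) (dxu : x ≠ u)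
    (dva : v ≠ a) (dvt1 : v ≠ t1) (dvt2 : v ≠ t2) (dvu : v ≠ u)
    (dat1 : a ≠ t1) (dat2 : a ≠ t2) (dau : a ≠ u)
    (dt12 : t1 ≠ t2) (dt1u : t1 ≠ u) (dt2u : t2 ≠ u) :
    False := by
  have hAdjt1 : ∀ {y : V}, G.Adj t1 y → y = a := by
    intro y hy
    have h1 : G.neighborSet t1 = {a} := ncard1_mem hdt1 hat1.symm
    have hm : y ∈ G.neighborSet t1 := hy
    rw [h1] at hm
    exact hm
  refine key_delete G hG (↑({x, v, a, t1, t2} : Finset V)) {a, x} ?_ ⟨x, by simp⟩ ?_ ?_ ?_ ?_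
  · intro p hp
    rcases hp with rfl | hp
    · simp
    · rw [Set.mem_singleton_iff] at hp; subst hp; simp
  · have hnax : ¬ G.Adj a x := by
      intro h
      rcases hAdja h with rfl | rfl | rfl
      · exact dxv rfl
      · exact dxt1 rfl
      · exact dxt2 rfl
    rintro p hp q hq hadj
    rcases hp with rfl | hp <;> [skip; rw [Set.mem_singleton_iff] at hp] <;>
      rcases hq with rfl | hq <;> try rw [Set.mem_singleton_iff] at hq
    · exact G.loopless.irrefl _ hadj
    · subst hq; exact hnax hadj
    · subst hp; exact hnax hadj.symm
    · subst hp; subst hq; exact G.loopless.irrefl _ hadj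
  · intro p hp q hadj
    rcases hp with rfl | hp
    · rcases hAdja hadj with rfl | rfl | rfl <;> simp
    · rw [Set.mem_singleton_iff] at hp; subst hp
      rw [hAdjx hadj]; simp
  · intro d hd
    simp only [Finset.coe_insert, Set.mem_insert_iff, Finset.coe_singleton,
      Set.mem_singleton_iff] at hd
    rcases hd with rfl | rfl | rfl | rfl | rfl
    · left; simp
    · right; exact ⟨a, by simp, hva.symm⟩
    · left; simp
    · right; exact ⟨a, by simp, hat1⟩
    · right; exact ⟨a, by simp, hat2⟩
  · rw [Set.ncard_pair (fun h => dxa h.symm)]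
    have hNuD : G.neighborSet u ∩ ↑({x, v, a, t1, t2} : Finset V) = {v} := by
      ext y
      simp only [Set.mem_inter_iff, SimpleGraph.mem_neighborSet, Finset.coe_insert,
        Set.mem_insert_iff, Finset.coe_singleton, Set.mem_singleton_iff]
      constructor
      · rintro ⟨hadj, rfl | rfl | rfl | rfl | rfl⟩
        · exact absurd (hAdjx hadj.symm) (fun h => dvu h.symm)
        · rfl
        · exact absurd hadj hnua
        · exact absurd hadj hnut1
        · exact absurd hadj hnut2
      · rintro rfl
        exact ⟨hvu.symm, by simp⟩
    have hu1' : (G.neighborSet u \ ↑({x, v, a, t1, t2} : Finset V)).ncard = deg G u - 1 := by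
      rw [ncard_sdiff_inter _ _ (Set.toFinite _), hNuD, Set.ncard_singleton]; rfl
    have hunotD : u ∉ ({x, v, a, t1, t2} : Finset V) := by
      simp only [Finset.mem_insert, Finset.mem_singleton, not_or]
      exact ⟨fun h => dxu h.symm, fun h => dvu h.symm, fun h => dau h.symm,
        fun h => dt1u h.symm, fun h => dt2u h.symm⟩
    by_cases hdt2' : deg G t2 = 1
    · -- t2 has degree 1 : affected set {u}
      have hAdjt2 : ∀ {y : V}, G.Adj t2 y → y = a := by
        intro y hy
        have h1 : G.neighborSet t2 = {a} := ncard1_mem hdt2' hat2.symm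
        have hm : y ∈ G.neighborSet t2 := hy
        rw [h1] at hm
        exact hm
      refine wkey G _ ({u} : Finset V) 2 ?_ ?_ ?_
      · intro p hp
        rw [Finset.mem_singleton] at hp
        subst hp
        exact hunotD
      · intro h hA hD
        rw [Finset.mem_singleton] at hA
        simp only [Finset.mem_insert, Finset.mem_singleton, not_or] at hD
        obtain ⟨hhx, hhv, hha, hht1, hht2⟩ := hD
        ext y
        simp only [Set.mem_inter_iff, SimpleGraph.mem_neighborSet, Finset.coe_insert,
          Set.mem_insert_iff, Finset.coe_singleton, Set.mem_singleton_iff,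
          Set.mem_empty_iff_false, iff_false, not_and, not_or]
        intro hadj
        refine ⟨?_, ?_, ?_, ?_, ?_⟩ <;> rintro rfl
        · exact hhv (hAdjx hadj.symm)
        · rcases hAdjv hadj.symm with rfl | rfl | rfl
          · exact hhx rfl
          · exact hA rfl
          · exact hha rfl
        · rcases hAdja hadj.symm with rfl | rfl | rfl
          · exact hhv rfl
          · exact hht1 rfl
          · exact hht2 rfl
        · exact hha (hAdjt1 hadj.symm)
        · exact hha (hAdjt2 hadj.symm)
      · rw [Finset.sum_singleton, Finset.sum_singleton,
          sum5 _ x v a t1 t2 dxv dxa dxt1 dxt2 dva dvt1 dvt2 dat1 dat2 dt12,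
          hu1', hdx, hdv, hda, hdt1, hdt2', hdu]
        simp only [show w0 3 = 5 from rfl, show w0 1 = 9 from rfl, show w0 2 = 6 from rfl,
          show (3 : ℕ) - 1 = 2 from rfl]
        omega
    · -- t2 has degree 2 : affected set {u, s}
      have hdt2'' : deg G t2 = 2 := by
        have := deg_pos hat2
        omega
      obtain ⟨s, hsa, hNt2⟩ := ncard2_mem hdt2'' (hat2.symm : a ∈ G.neighborSet t2)
      have ht2s : G.Adj t2 s := by
        have : s ∈ G.neighborSet t2 := by rw [hNt2]; simp
        exact this
      have hAdjt2 : ∀ {y : V}, G.Adj t2 y → y = a ∨ y = s := by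
        intro y hy
        have hm : y ∈ G.neighborSet t2 := hy
        rw [hNt2] at hm
        simpa using hm
      have hsx : s ≠ x := by
        intro h
        subst h
        exact dvt2 (hAdjx ht2s.symm).symm
      have hsu : s ≠ u := by
        intro h
        subst h
        exact hnut2 ht2s.symm
      have hsv : s ≠ v := by
        intro h
        subst h
        rcases hAdjv ht2s.symm with rfl | rfl | rfl
        · exact dxt2 rfl
        · exact dt2u rfl.symm
        · exact dat2 rfl
      have hst1 : s ≠ t1 := by
        intro h
        subst h
        exact dat2 (hAdjt1 ht2s.symm).symm
      have hst2 : s ≠ t2 := ht2s.ne'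
      refine wkey G _ ({u, s} : Finset V) 2 ?_ ?_ ?_
      · intro p hp
        simp only [Finset.mem_insert, Finset.mem_singleton] at hp
        rcases hp with rfl | rfl
        · exact hunotD
        · simp only [Finset.mem_insert, Finset.mem_singleton, not_or]
          exact ⟨fun h => hsx h.symm.symm, hsv, hsa, hst1, hst2⟩
      · intro h hA hD
        simp only [Finset.mem_insert, Finset.mem_singleton, not_or] at hA hD
        obtain ⟨hhu, hhs⟩ := hA
        obtain ⟨hhx, hhv, hha, hht1, hht2⟩ := hD
        ext y
        simp only [Set.mem_inter_iff, SimpleGraph.mem_neighborSet, Finset.coe_insert,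
          Set.mem_insert_iff, Finset.coe_singleton, Set.mem_singleton_iff,
          Set.mem_empty_iff_false, iff_false, not_and, not_or]
        intro hadj
        refine ⟨?_, ?_, ?_, ?_, ?_⟩ <;> rintro rfl
        · exact hhv (hAdjx hadj.symm)
        · rcases hAdjv hadj.symm with rfl | rfl | rfl
          · exact hhx rfl
          · exact hhu rfl
          · exact hha rfl
        · rcases hAdja hadj.symm with rfl | rfl | rfl
          · exact hhv rfl
          · exact hht1 rfl
          · exact hht2 rfl
        · exact hha (hAdjt1 hadj.symm)
        · rcases hAdjt2 hadj.symm with rfl | rfl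
          · exact hha rfl
          · exact hhs rfl
      · have hNsD : G.neighborSet s ∩ ↑({x, v, a, t1, t2} : Finset V) = {t2} := by
          ext y
          simp only [Set.mem_inter_iff, SimpleGraph.mem_neighborSet, Finset.coe_insert,
            Set.mem_insert_iff, Finset.coe_singleton, Set.mem_singleton_iff]
          constructor
          · rintro ⟨hadj, rfl | rfl | rfl | rfl | rfl⟩
            · exact absurd (hAdjx hadj.symm) hsv
            · rcases hAdjv hadj.symm with rfl | rfl | rfl
              · exact absurd rfl hsx
              · exact absurd rfl hsu
              · exact absurd rfl hsa
            · rcases hAdja hadj.symm with rfl | rfl | rfl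
              · exact absurd rfl hsv
              · exact absurd rfl hst1
              · exact absurd rfl hst2
            · exact absurd (hAdjt1 hadj.symm) hsa
            · rfl
          · rintro rfl
            exact ⟨ht2s.symm, by simp⟩
        have hs1 : (G.neighborSet s \ ↑({x, v, a, t1, t2} : Finset V)).ncard
            = deg G s - 1 := by
          rw [ncard_sdiff_inter _ _ (Set.toFinite _), hNsD, Set.ncard_singleton]; rfl
        rw [sum2 _ u s (fun h => hsu h.symm), sum2 _ u s (fun h => hsu h.symm),
          sum5 _ x v a t1 t2 dxv dxa dxt1 dxt2 dva dvt1 dvt2 dat1 dat2 dt12,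
          hu1', hs1, hdx, hdv, hda, hdt1, hdt2'', hdu]
        have b1 := w0_pred1 (deg G s) (deg_pos ht2s)
        simp only [show w0 3 = 5 from rfl, show w0 1 = 9 from rfl, show w0 2 = 6 from rfl,
          show (3 : ℕ) - 1 = 2 from rfl]
        omega
end BadCase
/-- A minimal counterexample contains no path `v–u–w` with `v,u,w` all of degree 3
such that `v` has a neighbor of degree 1 and `u` has no neighbor of degree 1. -/
theorem no_special_path {V : Type*} [Fintype V] (G : SimpleGraph V)
    (hG : MinimalCounterexample G) :
    ¬ ∃ v u w x : V, v ≠ w ∧ G.Adj v u ∧ G.Adj u w ∧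
      deg G v = 3 ∧ deg G u = 3 ∧ deg G w = 3 ∧
      G.Adj v x ∧ deg G x = 1 ∧ (∀ y, G.Adj u y → deg G y ≠ 1) := by
  classical
  rintro ⟨v, u, w, x, hvw, hvu, huw, hdv, hdu, hdw, hvx, hdx, hu1⟩
  have hsub := hG.1
  have hC4 := hG.2.1
  have mem : ∀ {p q : V}, G.Adj p q → q ∈ G.neighborSet p := fun h => h
  have hNx : G.neighborSet x = {v} := ncard1_mem hdx (mem hvx.symm)
  have hAdjx : ∀ {y : V}, G.Adj x y → y = v := by
    intro y hy
    have := mem hy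
    rw [hNx] at this
    exact this
  have hxu : x ≠ u := by
    intro h
    rw [h, hdu] at hdx
    exact absurd hdx (by norm_num)
  have hxw : x ≠ w := by
    intro h
    have h2 : u = v := hAdjx (h ▸ huw.symm)
    exact hvu.ne h2.symm
  obtain ⟨a, hax, hau, hNv⟩ := ncard3_mem2 hdv (mem hvx) (mem hvu) hxu
  have hva : G.Adj v a := by
    have : a ∈ G.neighborSet v := by rw [hNv]; simp
    exact this
  have hAdjv : ∀ {y : V}, G.Adj v y → y = x ∨ y = u ∨ y = a := by
    intro y hy
    have := mem hy
    rw [hNv] at this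
    simpa using this
  obtain ⟨z, hzv, hzw, hNu⟩ := ncard3_mem2 hdu (mem hvu.symm) (mem huw) hvw
  have huz : G.Adj u z := by
    have : z ∈ G.neighborSet u := by rw [hNu]; simp
    exact this
  have hAdju : ∀ {y : V}, G.Adj u y → y = v ∨ y = w ∨ y = z := by
    intro y hy
    have := mem hy
    rw [hNu] at this
    simpa using this
  have hzu : z ≠ u := huz.ne'
  have hzx : z ≠ x := by
    intro h
    have : u = v := hAdjx (h ▸ huz).symm
    exact hvu.ne this.symm
  have hdz2 : 2 ≤ deg G z := by
    have h1 := deg_pos huz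
    have h2 := hu1 z huz
    omega
  have hdz3 : deg G z ≤ 3 := hsub z
  have hdw2 : deg G w ≤ 3 := hsub w
  by_cases haw : a = w
  · -- CASE A : a = w
    rw [haw] at hva hNv hAdjv hax hau
    obtain ⟨b, hbu, hbv, hNw⟩ := ncard3_mem2 hdw (mem huw.symm) (mem hva.symm) hvu.ne'
    have hwb : G.Adj w b := by
      have : b ∈ G.neighborSet w := by rw [hNw]; simp
      exact this
    have hAdjw : ∀ {y : V}, G.Adj w y → y = u ∨ y = v ∨ y = b := by
      intro y hy
      have := mem hy
      rw [hNw] at this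
      simpa using this
    have hbw : b ≠ w := hwb.ne'
    have hbx : b ≠ x := by
      intro h
      exact hvw (hAdjx (h ▸ hwb.symm)).symm
    -- D = {v, x, u, w}, S₀ = {v}, k = 1
    refine key_delete G hG (↑({v, x, u, w} : Finset V)) {v} ?_ ⟨v, by simp⟩ ?_ ?_ ?_ ?_
    · intro p hp
      rw [Set.mem_singleton_iff] at hp
      subst hp
      simp
    · rintro p hp q hq hadj
      rw [Set.mem_singleton_iff] at hp hq
      subst hp; subst hq
      exact G.loopless.irrefl _ hadj
    · intro p hp q hadj
      rw [Set.mem_singleton_iff] at hp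
      subst hp
      rcases hAdjv hadj with rfl | rfl | rfl <;> simp
    · intro d hd
      simp only [Finset.coe_insert, Set.mem_insert_iff, Finset.coe_singleton,
        Set.mem_singleton_iff] at hd
      rcases hd with rfl | rfl | rfl | rfl
      · left; rfl
      · right; exact ⟨v, rfl, hvx⟩
      · right; exact ⟨v, rfl, hvu⟩
      · right; exact ⟨v, rfl, hva⟩
    · rw [Set.ncard_singleton]
      by_cases hbz : b = z
      · -- affected set {z}; z loses 2 edges
        rw [hbz] at hwb hbu hbv hbx hbw hNw hAdjw
        refine wkey G _ ({z} : Finset V) 1 ?_ ?_ ?_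
        · intro p hp
          rw [Finset.mem_singleton] at hp
          subst hp
          simp only [Finset.mem_insert, Finset.mem_singleton, not_or]
          exact ⟨hzv, hzx, hzu, hzw⟩
        · intro h hA hD
          simp only [Finset.mem_singleton] at hA
          simp only [Finset.mem_insert, Finset.mem_singleton, not_or] at hD
          obtain ⟨hhv, hhx, hhu, hhw⟩ := hD
          ext y
          simp only [Set.mem_inter_iff, SimpleGraph.mem_neighborSet, Finset.coe_insert,
            Set.mem_insert_iff, Finset.coe_singleton, Set.mem_singleton_iff,
            Set.mem_empty_iff_false, iff_false, not_and, not_or]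
          intro hadj
          refine ⟨?_, ?_, ?_, ?_⟩ <;> rintro rfl
          · rcases hAdjv hadj.symm with rfl | rfl | rfl
            · exact hhx rfl
            · exact hhu rfl
            · exact hhw rfl
          · exact hhv (hAdjx hadj.symm)
          · rcases hAdju hadj.symm with rfl | rfl | rfl
            · exact hhv rfl
            · exact hhw rfl
            · exact hA rfl
          · rcases hAdjw hadj.symm with rfl | rfl | rfl
            · exact hhu rfl
            · exact hhv rfl
            · exact hA rfl
        · -- arithmetic
          have hNzD : G.neighborSet z ∩ ↑({v, x, u, w} : Finset V) = {u, w} := by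
            ext y
            simp only [Set.mem_inter_iff, SimpleGraph.mem_neighborSet, Finset.coe_insert,
              Set.mem_insert_iff, Finset.coe_singleton, Set.mem_singleton_iff]
            constructor
            · rintro ⟨hadj, rfl | rfl | rfl | rfl⟩
              · rcases hAdjv hadj.symm with rfl | rfl | rfl
                · exact absurd rfl hzx
                · exact absurd rfl hzu
                · exact absurd rfl hzw
              · exact absurd (hAdjx hadj.symm) hzv
              · simp
              · simp
            · rintro (rfl | rfl)
              · exact ⟨huz.symm, by simp⟩
              · exact ⟨hwb.symm, by simp⟩
          have hz1 : (G.neighborSet z \ ↑({v, x, u, w} : Finset V)).ncard = deg G z - 2 := by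
            rw [ncard_sdiff_inter _ _ (Set.toFinite _), hNzD, Set.ncard_pair huw.ne]; rfl
          rw [Finset.sum_singleton, Finset.sum_singleton,
            sum4 _ v x u w hvx.ne hvu.ne hvw hxu hxw huw.ne, hz1, hdv, hdx, hdu, hdw]
          have b1 := w0_le (deg G z - 2)
          have b2 := w0_ge (deg G z)
          simp only [show w0 3 = 5 from rfl, show w0 1 = 9 from rfl]
          omega
      · -- affected set {z, b}
        refine wkey G _ ({z, b} : Finset V) 1 ?_ ?_ ?_
        · intro p hp
          simp only [Finset.mem_insert, Finset.mem_singleton] at hp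
          simp only [Finset.mem_insert, Finset.mem_singleton, not_or]
          rcases hp with rfl | rfl
          · exact ⟨hzv, hzx, hzu, hzw⟩
          · exact ⟨hbv, hbx, hbu, hbw⟩
        · intro h hA hD
          simp only [Finset.mem_insert, Finset.mem_singleton, not_or] at hA hD
          obtain ⟨hhz, hhb⟩ := hA
          obtain ⟨hhv, hhx, hhu, hhw⟩ := hD
          ext y
          simp only [Set.mem_inter_iff, SimpleGraph.mem_neighborSet, Finset.coe_insert,
            Set.mem_insert_iff, Finset.coe_singleton, Set.mem_singleton_iff,
            Set.mem_empty_iff_false, iff_false, not_and, not_or]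
          intro hadj
          refine ⟨?_, ?_, ?_, ?_⟩ <;> rintro rfl
          · rcases hAdjv hadj.symm with rfl | rfl | rfl
            · exact hhx rfl
            · exact hhu rfl
            · exact hhw rfl
          · exact hhv (hAdjx hadj.symm)
          · rcases hAdju hadj.symm with rfl | rfl | rfl
            · exact hhv rfl
            · exact hhw rfl
            · exact hhz rfl
          · rcases hAdjw hadj.symm with rfl | rfl | rfl
            · exact hhu rfl
            · exact hhv rfl
            · exact hhb rfl
        · have hNzD : G.neighborSet z ∩ ↑({v, x, u, w} : Finset V) = {u} := by
            ext y
            simp only [Set.mem_inter_iff, SimpleGraph.mem_neighborSet, Finset.coe_insert,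
              Set.mem_insert_iff, Finset.coe_singleton, Set.mem_singleton_iff]
            constructor
            · rintro ⟨hadj, rfl | rfl | rfl | rfl⟩
              · rcases hAdjv hadj.symm with rfl | rfl | rfl
                · exact absurd rfl hzx
                · exact absurd rfl hzu
                · exact absurd rfl hzw
              · exact absurd (hAdjx hadj.symm) hzv
              · rfl
              · rcases hAdjw hadj.symm with rfl | rfl | rfl
                · exact absurd rfl hzu
                · exact absurd rfl hzv
                · exact absurd rfl hbz
            · rintro rfl
              exact ⟨huz.symm, by simp⟩
          have hNbD : G.neighborSet b ∩ ↑({v, x, u, w} : Finset V) = {w} := by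
            ext y
            simp only [Set.mem_inter_iff, SimpleGraph.mem_neighborSet, Finset.coe_insert,
              Set.mem_insert_iff, Finset.coe_singleton, Set.mem_singleton_iff]
            constructor
            · rintro ⟨hadj, rfl | rfl | rfl | rfl⟩
              · rcases hAdjv hadj.symm with rfl | rfl | rfl
                · exact absurd rfl hbx
                · exact absurd rfl hbu
                · exact absurd rfl hbw
              · exact absurd (hAdjx hadj.symm) hbv
              · rcases hAdju hadj.symm with rfl | rfl | rfl
                · exact absurd rfl hbv
                · exact absurd rfl hbw
                · exact absurd rfl hbz
              · rfl
            · rintro rfl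
              exact ⟨hwb.symm, by simp⟩
          have hz1 : (G.neighborSet z \ ↑({v, x, u, w} : Finset V)).ncard = deg G z - 1 := by
            rw [ncard_sdiff_inter _ _ (Set.toFinite _), hNzD, Set.ncard_singleton]; rfl
          have hb1 : (G.neighborSet b \ ↑({v, x, u, w} : Finset V)).ncard = deg G b - 1 := by
            rw [ncard_sdiff_inter _ _ (Set.toFinite _), hNbD, Set.ncard_singleton]; rfl
          have hzb : z ≠ b := fun h => hbz h.symm
          rw [sum2 _ z b hzb, sum2 _ z b hzb,
            sum4 _ v x u w hvx.ne hvu.ne hvw hxu hxw huw.ne, hz1, hb1, hdv, hdx, hdu, hdw]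
          have b1 := w0_pred2 (deg G z) hdz2
          have b2 := w0_pred1 (deg G b) (deg_pos hwb)
          simp only [show w0 3 = 5 from rfl, show w0 1 = 9 from rfl]
          omega
  · -- a ≠ w
    by_cases haz : a = z
    · -- CASE B : a = z
      rw [haz] at hva hNv hAdjv hax hau
      have hwz_nadj : ¬ G.Adj w z := by
        intro hwz
        exact hC4 ⟨v, u, w, z, hvu.ne, hvw, hva.ne, huw.ne, Ne.symm hzu, Ne.symm hzw,
          hvu, huw, hwz, hva.symm⟩
      refine key_delete G hG (↑({v, x, u, z} : Finset V)) {v} ?_ ⟨v, by simp⟩ ?_ ?_ ?_ ?_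
      · intro p hp
        rw [Set.mem_singleton_iff] at hp
        subst hp
        simp
      · rintro p hp q hq hadj
        rw [Set.mem_singleton_iff] at hp hq
        subst hp; subst hq
        exact G.loopless.irrefl _ hadj
      · intro p hp q hadj
        rw [Set.mem_singleton_iff] at hp
        subst hp
        rcases hAdjv hadj with rfl | rfl | rfl <;> simp
      · intro d hd
        simp only [Finset.coe_insert, Set.mem_insert_iff, Finset.coe_singleton,
          Set.mem_singleton_iff] at hd
        rcases hd with rfl | rfl | rfl | rfl
        · left; rfl
        · right; exact ⟨v, rfl, hvx⟩
        · right; exact ⟨v, rfl, hvu⟩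
        · right; exact ⟨v, rfl, hva⟩
      · rw [Set.ncard_singleton]
        have hwD : w ∉ ({v, x, u, z} : Finset V) := by
          simp only [Finset.mem_insert, Finset.mem_singleton, not_or]
          exact ⟨fun h => hvw h.symm, fun h => hxw h.symm, fun h => huw.ne h.symm,
            fun h => hzw h.symm⟩
        have hNwD : G.neighborSet w ∩ ↑({v, x, u, z} : Finset V) = {u} := by
          ext y
          simp only [Set.mem_inter_iff, SimpleGraph.mem_neighborSet, Finset.coe_insert,
            Set.mem_insert_iff, Finset.coe_singleton, Set.mem_singleton_iff]
          constructor
          · rintro ⟨hadj, rfl | rfl | rfl | rfl⟩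
            · rcases hAdjv hadj.symm with rfl | rfl | rfl
              · exact absurd rfl hxw
              · exact absurd rfl huw.ne
              · exact absurd rfl hzw
            · exact absurd (hAdjx hadj.symm).symm hvw
            · rfl
            · exact absurd hadj hwz_nadj
          · rintro rfl
            exact ⟨huw.symm, by simp⟩
        have hw1 : (G.neighborSet w \ ↑({v, x, u, z} : Finset V)).ncard = deg G w - 1 := by
          rw [ncard_sdiff_inter _ _ (Set.toFinite _), hNwD, Set.ncard_singleton]; rfl
        by_cases hdegz : deg G z = 2
        · -- deg z = 2 : affected set {w}
          obtain ⟨q, hqu, hNz0⟩ := ncard2_mem hdegz (mem huz.symm)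
          have hvmem : v ∈ G.neighborSet z := mem hva.symm
          rw [hNz0] at hvmem
          have hqv : q = v := by
            rcases hvmem with h | h
            · exact absurd h hvu.ne
            · exact h.symm
          rw [hqv] at hNz0
          have hAdjz : ∀ {y : V}, G.Adj z y → y = u ∨ y = v := by
            intro y hy
            have hm : y ∈ G.neighborSet z := hy
            rw [hNz0] at hm
            simpa using hm
          refine wkey G _ ({w} : Finset V) 1 ?_ ?_ ?_
          · intro p hp
            rw [Finset.mem_singleton] at hp
            subst hp
            exact hwD
          · intro h hA hD
            rw [Finset.mem_singleton] at hA
            simp only [Finset.mem_insert, Finset.mem_singleton, not_or] at hD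
            obtain ⟨hhv, hhx, hhu, hhz⟩ := hD
            ext y
            simp only [Set.mem_inter_iff, SimpleGraph.mem_neighborSet, Finset.coe_insert,
              Set.mem_insert_iff, Finset.coe_singleton, Set.mem_singleton_iff,
              Set.mem_empty_iff_false, iff_false, not_and, not_or]
            intro hadj
            refine ⟨?_, ?_, ?_, ?_⟩ <;> rintro rfl
            · rcases hAdjv hadj.symm with rfl | rfl | rfl
              · exact hhx rfl
              · exact hhu rfl
              · exact hhz rfl
            · exact hhv (hAdjx hadj.symm)
            · rcases hAdju hadj.symm with rfl | rfl | rfl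
              · exact hhv rfl
              · exact hA rfl
              · exact hhz rfl
            · rcases hAdjz hadj.symm with rfl | rfl
              · exact hhu rfl
              · exact hhv rfl
          · rw [Finset.sum_singleton, Finset.sum_singleton,
              sum4 _ v x u z hvx.ne hvu.ne hva.ne hxu (Ne.symm hzx) (Ne.symm hzu),
              hw1, hdv, hdx, hdu, hdegz, hdw]
            simp only [show w0 3 = 5 from rfl, show w0 1 = 9 from rfl,
              show w0 2 = 6 from rfl, show (3 : ℕ) - 1 = 2 from rfl]
            omega
        · -- deg z = 3 : affected set {w, c}
          have hdegz3 : deg G z = 3 := by omega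
          obtain ⟨c, hcu, hcv, hNz⟩ := ncard3_mem2 hdegz3 (mem huz.symm) (mem hva.symm) hvu.ne'
          have hzc : G.Adj z c := by
            have : c ∈ G.neighborSet z := by rw [hNz]; simp
            exact this
          have hAdjz : ∀ {y : V}, G.Adj z y → y = u ∨ y = v ∨ y = c := by
            intro y hy
            have hm : y ∈ G.neighborSet z := hy
            rw [hNz] at hm
            simpa using hm
          have hcw : c ≠ w := by
            intro h
            subst h
            exact hwz_nadj hzc.symm
          have hcx : c ≠ x := by
            intro h
            subst h
            exact hzv (hAdjx hzc.symm)
          have hcz : c ≠ z := hzc.ne'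
          refine wkey G _ ({w, c} : Finset V) 1 ?_ ?_ ?_
          · intro p hp
            simp only [Finset.mem_insert, Finset.mem_singleton] at hp
            rcases hp with rfl | rfl
            · exact hwD
            · simp only [Finset.mem_insert, Finset.mem_singleton, not_or]
              exact ⟨hcv, hcx, hcu, hcz⟩
          · intro h hA hD
            simp only [Finset.mem_insert, Finset.mem_singleton, not_or] at hA hD
            obtain ⟨hhw, hhc⟩ := hA
            obtain ⟨hhv, hhx, hhu, hhz⟩ := hD
            ext y
            simp only [Set.mem_inter_iff, SimpleGraph.mem_neighborSet, Finset.coe_insert,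
              Set.mem_insert_iff, Finset.coe_singleton, Set.mem_singleton_iff,
              Set.mem_empty_iff_false, iff_false, not_and, not_or]
            intro hadj
            refine ⟨?_, ?_, ?_, ?_⟩ <;> rintro rfl
            · rcases hAdjv hadj.symm with rfl | rfl | rfl
              · exact hhx rfl
              · exact hhu rfl
              · exact hhz rfl
            · exact hhv (hAdjx hadj.symm)
            · rcases hAdju hadj.symm with rfl | rfl | rfl
              · exact hhv rfl
              · exact hhw rfl
              · exact hhz rfl
            · rcases hAdjz hadj.symm with rfl | rfl | rfl
              · exact hhu rfl
              · exact hhv rfl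
              · exact hhc rfl
          · have hNcD : G.neighborSet c ∩ ↑({v, x, u, z} : Finset V) = {z} := by
              ext y
              simp only [Set.mem_inter_iff, SimpleGraph.mem_neighborSet, Finset.coe_insert,
                Set.mem_insert_iff, Finset.coe_singleton, Set.mem_singleton_iff]
              constructor
              · rintro ⟨hadj, rfl | rfl | rfl | rfl⟩
                · rcases hAdjv hadj.symm with rfl | rfl | rfl
                  · exact absurd rfl hcx
                  · exact absurd rfl hcu
                  · exact absurd rfl hcz
                · exact absurd (hAdjx hadj.symm) hcv
                · rcases hAdju hadj.symm with rfl | rfl | rfl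
                  · exact absurd rfl hcv
                  · exact absurd rfl hcw
                  · exact absurd rfl hcz
                · rfl
              · rintro rfl
                exact ⟨hzc.symm, by simp⟩
            have hc1 : (G.neighborSet c \ ↑({v, x, u, z} : Finset V)).ncard
                = deg G c - 1 := by
              rw [ncard_sdiff_inter _ _ (Set.toFinite _), hNcD, Set.ncard_singleton]; rfl
            rw [sum2 _ w c (fun h => hcw h.symm), sum2 _ w c (fun h => hcw h.symm),
              sum4 _ v x u z hvx.ne hvu.ne hva.ne hxu (Ne.symm hzx) (Ne.symm hzu),
              hw1, hc1, hdv, hdx, hdu, hdegz3, hdw]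
            have b1 := w0_pred1 (deg G c) (deg_pos hzc)
            simp only [show w0 3 = 5 from rfl, show w0 1 = 9 from rfl,
              show (3 : ℕ) - 1 = 2 from rfl, show w0 2 = 6 from rfl]
            omega
    · -- CASE C : a ∉ {w, z}
      have hnua : ¬ G.Adj u a := by
        intro h
        rcases hAdju h with rfl | rfl | rfl
        · exact hva.ne' rfl
        · exact haw rfl
        · exact haz rfl
      have hnwa : ¬ G.Adj w a := by
        intro h
        exact hC4 ⟨v, u, w, a, hvu.ne, hvw, hva.ne, huw.ne, Ne.symm hau,
          fun hh => haw hh.symm, hvu, huw, h, hva.symm⟩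
      have hnza : ¬ G.Adj z a := by
        intro h
        exact hC4 ⟨v, u, z, a, hvu.ne, Ne.symm hzv, hva.ne, Ne.symm hzu, Ne.symm hau,
          fun hh => haz hh.symm, hvu, huz, h, hva.symm⟩
      have tfact : ∀ t : V, G.Adj a t → t ≠ v →
          (t ≠ x ∧ t ≠ u ∧ t ≠ w ∧ t ≠ z ∧ ¬ G.Adj u t) := by
        intro t hat htv
        have h1 : t ≠ x := by
          intro h
          subst h
          exact hva.ne' (hAdjx hat.symm)
        have h2 : t ≠ u := by
          intro h
          subst h
          exact hnua hat.symm
        have h3 : t ≠ w := by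
          intro h
          subst h
          exact hnwa hat.symm
        have h4 : t ≠ z := by
          intro h
          subst h
          exact hnza hat.symm
        refine ⟨h1, h2, h3, h4, fun h => ?_⟩
        rcases hAdju h with rfl | rfl | rfl
        · exact htv rfl
        · exact h3 rfl
        · exact h4 rfl
      have hda_lb := deg_pos hva
      have hda_ub := hsub a
      -- common pieces for the deletion D = {v,x,u,a}
      have hwD : w ∉ ({v, x, u, a} : Finset V) := by
        simp only [Finset.mem_insert, Finset.mem_singleton, not_or]
        exact ⟨fun h => hvw h.symm, fun h => hxw h.symm, fun h => huw.ne h.symm,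
          fun h => haw h.symm⟩
      have hzD : z ∉ ({v, x, u, a} : Finset V) := by
        simp only [Finset.mem_insert, Finset.mem_singleton, not_or]
        exact ⟨hzv, hzx, hzu, fun h => haz h.symm⟩
      have hNwD : G.neighborSet w ∩ ↑({v, x, u, a} : Finset V) = {u} := by
        ext y
        simp only [Set.mem_inter_iff, SimpleGraph.mem_neighborSet, Finset.coe_insert,
          Set.mem_insert_iff, Finset.coe_singleton, Set.mem_singleton_iff]
        constructor
        · rintro ⟨hadj, rfl | rfl | rfl | rfl⟩
          · rcases hAdjv hadj.symm with rfl | rfl | rfl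
            · exact absurd rfl hxw
            · exact absurd rfl huw.ne
            · exact absurd rfl (fun h => haw h)
          · exact absurd (hAdjx hadj.symm).symm hvw
          · rfl
          · exact absurd hadj hnwa
        · rintro rfl
          exact ⟨huw.symm, by simp⟩
      have hNzD : G.neighborSet z ∩ ↑({v, x, u, a} : Finset V) = {u} := by
        ext y
        simp only [Set.mem_inter_iff, SimpleGraph.mem_neighborSet, Finset.coe_insert,
          Set.mem_insert_iff, Finset.coe_singleton, Set.mem_singleton_iff]
        constructor
        · rintro ⟨hadj, rfl | rfl | rfl | rfl⟩
          · rcases hAdjv hadj.symm with rfl | rfl | rfl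
            · exact absurd rfl hzx
            · exact absurd rfl hzu
            · exact absurd rfl (fun h => haz h.symm)
          · exact absurd (hAdjx hadj.symm) hzv
          · rfl
          · exact absurd hadj hnza
        · rintro rfl
          exact ⟨huz.symm, by simp⟩
      have hw1 : (G.neighborSet w \ ↑({v, x, u, a} : Finset V)).ncard = deg G w - 1 := by
        rw [ncard_sdiff_inter _ _ (Set.toFinite _), hNwD, Set.ncard_singleton]; rfl
      have hz1 : (G.neighborSet z \ ↑({v, x, u, a} : Finset V)).ncard = deg G z - 1 := by
        rw [ncard_sdiff_inter _ _ (Set.toFinite _), hNzD, Set.ncard_singleton]; rfl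
      have hsumD : ∑ h ∈ ({v, x, u, a} : Finset V), w0 (deg G h)
          = w0 3 + w0 1 + w0 3 + w0 (deg G a) := by
        rw [sum4 _ v x u a hvx.ne hvu.ne hva.ne hxu (Ne.symm hax) (Ne.symm hau),
          hdv, hdx, hdu]
      have main : ∀ t : V, G.Adj a t → t ≠ v →
          G.neighborSet t ∩ ↑({v, x, u, a} : Finset V) = {a} := by
        intro t hat htv
        obtain ⟨htx, htu, htw, htz, hnut⟩ := tfact t hat htv
        ext y
        simp only [Set.mem_inter_iff, SimpleGraph.mem_neighborSet, Finset.coe_insert,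
          Set.mem_insert_iff, Finset.coe_singleton, Set.mem_singleton_iff]
        constructor
        · rintro ⟨hadj, rfl | rfl | rfl | rfl⟩
          · rcases hAdjv hadj.symm with rfl | rfl | rfl
            · exact absurd rfl htx
            · exact absurd rfl htu
            · exact absurd hat (G.loopless.irrefl _)
          · exact absurd (hAdjx hadj.symm) htv
          · exact absurd hadj.symm hnut
          · rfl
        · rintro rfl
          exact ⟨hat.symm, by simp⟩
      have hS0sub : ({v} : Set V) ⊆ ↑({v, x, u, a} : Finset V) := by
        intro p hp
        rw [Set.mem_singleton_iff] at hp
        subst hp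
        simp
      have hS0indep : ∀ p ∈ ({v} : Set V), ∀ q ∈ ({v} : Set V), ¬ G.Adj p q := by
        rintro p hp q hq hadj
        rw [Set.mem_singleton_iff] at hp hq
        subst hp; subst hq
        exact G.loopless.irrefl _ hadj
      have hS0nb : ∀ p ∈ ({v} : Set V), ∀ q, G.Adj p q →
          q ∈ (↑({v, x, u, a} : Finset V) : Set V) := by
        intro p hp q hadj
        rw [Set.mem_singleton_iff] at hp
        subst hp
        rcases hAdjv hadj with rfl | rfl | rfl <;> simp
      have hS0dom : ∀ d ∈ (↑({v, x, u, a} : Finset V) : Set V),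
          d ∈ ({v} : Set V) ∨ ∃ p ∈ ({v} : Set V), G.Adj p d := by
        intro d hd
        simp only [Finset.coe_insert, Set.mem_insert_iff, Finset.coe_singleton,
          Set.mem_singleton_iff] at hd
        rcases hd with rfl | rfl | rfl | rfl
        · left; rfl
        · right; exact ⟨v, rfl, hvx⟩
        · right; exact ⟨v, rfl, hvu⟩
        · right; exact ⟨v, rfl, hva⟩
      by_cases hda_1 : deg G a = 1
      · -- C1 : deg a = 1, affected set {w, z}
        have hAdja : ∀ {y : V}, G.Adj a y → y = v := by
          intro y hy
          have h1 : G.neighborSet a = {v} := ncard1_mem hda_1 (mem hva.symm)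
          have hm : y ∈ G.neighborSet a := hy
          rw [h1] at hm
          exact hm
        refine key_delete G hG (↑({v, x, u, a} : Finset V)) {v} hS0sub ⟨v, by simp⟩
          hS0indep hS0nb hS0dom ?_
        rw [Set.ncard_singleton]
        refine wkey G _ ({w, z} : Finset V) 1 ?_ ?_ ?_
        · intro p hp
          simp only [Finset.mem_insert, Finset.mem_singleton] at hp
          rcases hp with rfl | rfl
          · exact hwD
          · exact hzD
        · intro h hA hD
          simp only [Finset.mem_insert, Finset.mem_singleton, not_or] at hA hD
          obtain ⟨hhw, hhz⟩ := hA
          obtain ⟨hhv, hhx, hhu, hha⟩ := hD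
          ext y
          simp only [Set.mem_inter_iff, SimpleGraph.mem_neighborSet, Finset.coe_insert,
            Set.mem_insert_iff, Finset.coe_singleton, Set.mem_singleton_iff,
            Set.mem_empty_iff_false, iff_false, not_and, not_or]
          intro hadj
          refine ⟨?_, ?_, ?_, ?_⟩ <;> rintro rfl
          · rcases hAdjv hadj.symm with rfl | rfl | rfl
            · exact hhx rfl
            · exact hhu rfl
            · exact hha rfl
          · exact hhv (hAdjx hadj.symm)
          · rcases hAdju hadj.symm with rfl | rfl | rfl
            · exact hhv rfl
            · exact hhw rfl
            · exact hhz rfl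
          · exact hhv (hAdja hadj.symm)
        · rw [sum2 _ w z (Ne.symm hzw), sum2 _ w z (Ne.symm hzw), hsumD,
            hw1, hz1, hdw, hda_1]
          have b1 := w0_pred2 (deg G z) hdz2
          simp only [show w0 3 = 5 from rfl, show w0 1 = 9 from rfl,
            show (3 : ℕ) - 1 = 2 from rfl, show w0 2 = 6 from rfl]
          omega
      · by_cases hda_2 : deg G a = 2
        · -- C2 : deg a = 2, affected set {w, z, t}
          obtain ⟨t, htv, hNa⟩ := ncard2_mem hda_2 (mem hva.symm)
          have hat : G.Adj a t := by
            have : t ∈ G.neighborSet a := by rw [hNa]; simp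
            exact this
          have hAdja : ∀ {y : V}, G.Adj a y → y = v ∨ y = t := by
            intro y hy
            have hm : y ∈ G.neighborSet a := hy
            rw [hNa] at hm
            simpa using hm
          obtain ⟨htx, htu, htw, htz, hnut⟩ := tfact t hat htv
          have hNtD := main t hat htv
          have ht1e : (G.neighborSet t \ ↑({v, x, u, a} : Finset V)).ncard
              = deg G t - 1 := by
            rw [ncard_sdiff_inter _ _ (Set.toFinite _), hNtD, Set.ncard_singleton]; rfl
          refine key_delete G hG (↑({v, x, u, a} : Finset V)) {v} hS0sub ⟨v, by simp⟩
            hS0indep hS0nb hS0dom ?_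
          rw [Set.ncard_singleton]
          refine wkey G _ ({w, z, t} : Finset V) 1 ?_ ?_ ?_
          · intro p hp
            simp only [Finset.mem_insert, Finset.mem_singleton] at hp
            rcases hp with rfl | rfl | rfl
            · exact hwD
            · exact hzD
            · simp only [Finset.mem_insert, Finset.mem_singleton, not_or]
              exact ⟨htv, htx, htu, hat.ne'⟩
          · intro h hA hD
            simp only [Finset.mem_insert, Finset.mem_singleton, not_or] at hA hD
            obtain ⟨hhw, hhz, hht⟩ := hA
            obtain ⟨hhv, hhx, hhu, hha⟩ := hD
            ext y
            simp only [Set.mem_inter_iff, SimpleGraph.mem_neighborSet, Finset.coe_insert,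
              Set.mem_insert_iff, Finset.coe_singleton, Set.mem_singleton_iff,
              Set.mem_empty_iff_false, iff_false, not_and, not_or]
            intro hadj
            refine ⟨?_, ?_, ?_, ?_⟩ <;> rintro rfl
            · rcases hAdjv hadj.symm with rfl | rfl | rfl
              · exact hhx rfl
              · exact hhu rfl
              · exact hha rfl
            · exact hhv (hAdjx hadj.symm)
            · rcases hAdju hadj.symm with rfl | rfl | rfl
              · exact hhv rfl
              · exact hhw rfl
              · exact hhz rfl
            · rcases hAdja hadj.symm with rfl | rfl
              · exact hhv rfl
              · exact hht rfl
          · rw [sum3 _ w z t (Ne.symm hzw) (fun h => htw h.symm) (fun h => htz h.symm),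
              sum3 _ w z t (Ne.symm hzw) (fun h => htw h.symm) (fun h => htz h.symm),
              hsumD, hw1, hz1, ht1e, hdw, hda_2]
            have b1 := w0_pred2 (deg G z) hdz2
            have b2 := w0_pred1 (deg G t) (deg_pos hat)
            simp only [show w0 3 = 5 from rfl, show w0 1 = 9 from rfl,
              show (3 : ℕ) - 1 = 2 from rfl, show w0 2 = 6 from rfl]
            omega
        · -- C3 : deg a = 3
          have hda_3 : deg G a = 3 := by omega
          obtain ⟨t1, t2, ht1v, ht2v, ht12, hNa⟩ := ncard3_mem1 hda_3 (mem hva.symm)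
          have hat1 : G.Adj a t1 := by
            have : t1 ∈ G.neighborSet a := by rw [hNa]; simp
            exact this
          have hat2 : G.Adj a t2 := by
            have : t2 ∈ G.neighborSet a := by rw [hNa]; simp
            exact this
          have hAdja : ∀ {y : V}, G.Adj a y → y = v ∨ y = t1 ∨ y = t2 := by
            intro y hy
            have hm : y ∈ G.neighborSet a := hy
            rw [hNa] at hm
            simpa using hm
          obtain ⟨ht1x, ht1u, ht1w, ht1z, hnut1⟩ := tfact t1 hat1 ht1v
          obtain ⟨ht2x, ht2u, ht2w, ht2z, hnut2⟩ := tfact t2 hat2 ht2v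
          by_cases hbad1 : deg G t1 = 1 ∧ deg G t2 ≤ 2
          · exact bad_case G hG v u x a t1 t2 hvu hvx hva hat1 hat2 hdv hdx hdu hda_3
              hbad1.1 hbad1.2 hAdjv hAdjx hAdja hnua hnut1 hnut2
              hvx.ne' (fun h => hax h.symm) (fun h => ht1x h.symm) (fun h => ht2x h.symm)
              hxu hva.ne (fun h => ht1v h.symm) (fun h => ht2v h.symm) hvu.ne
              hat1.ne hat2.ne hau ht12 ht1u ht2u
          · by_cases hbad2 : deg G t2 = 1 ∧ deg G t1 ≤ 2
            · have hAdja' : ∀ {y : V}, G.Adj a y → y = v ∨ y = t2 ∨ y = t1 := by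
                intro y hy
                rcases hAdja hy with h | h | h
                · exact Or.inl h
                · exact Or.inr (Or.inr h)
                · exact Or.inr (Or.inl h)
              exact bad_case G hG v u x a t2 t1 hvu hvx hva hat2 hat1 hdv hdx hdu hda_3
                hbad2.1 hbad2.2 hAdjv hAdjx hAdja' hnua hnut2 hnut1
                hvx.ne' (fun h => hax h.symm) (fun h => ht2x h.symm) (fun h => ht1x h.symm)
                hxu hva.ne (fun h => ht2v h.symm) (fun h => ht1v h.symm) hvu.ne
                hat2.ne hat1.ne hau (Ne.symm ht12) ht2u ht1u
            · -- good case : affected set {w, z, t1, t2}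
              have hNt1D := main t1 hat1 ht1v
              have hNt2D := main t2 hat2 ht2v
              have ht1e : (G.neighborSet t1 \ ↑({v, x, u, a} : Finset V)).ncard
                  = deg G t1 - 1 := by
                rw [ncard_sdiff_inter _ _ (Set.toFinite _), hNt1D, Set.ncard_singleton]; rfl
              have ht2e : (G.neighborSet t2 \ ↑({v, x, u, a} : Finset V)).ncard
                  = deg G t2 - 1 := by
                rw [ncard_sdiff_inter _ _ (Set.toFinite _), hNt2D, Set.ncard_singleton]; rfl
              refine key_delete G hG (↑({v, x, u, a} : Finset V)) {v} hS0sub ⟨v, by simp⟩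
                hS0indep hS0nb hS0dom ?_
              rw [Set.ncard_singleton]
              refine wkey G _ ({w, z, t1, t2} : Finset V) 1 ?_ ?_ ?_
              · intro p hp
                simp only [Finset.mem_insert, Finset.mem_singleton] at hp
                rcases hp with rfl | rfl | rfl | rfl
                · exact hwD
                · exact hzD
                · simp only [Finset.mem_insert, Finset.mem_singleton, not_or]
                  exact ⟨ht1v, ht1x, ht1u, hat1.ne'⟩
                · simp only [Finset.mem_insert, Finset.mem_singleton, not_or]
                  exact ⟨ht2v, ht2x, ht2u, hat2.ne'⟩
              · intro h hA hD
                simp only [Finset.mem_insert, Finset.mem_singleton, not_or] at hA hD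
                obtain ⟨hhw, hhz, hht1, hht2⟩ := hA
                obtain ⟨hhv, hhx, hhu, hha⟩ := hD
                ext y
                simp only [Set.mem_inter_iff, SimpleGraph.mem_neighborSet,
                  Finset.coe_insert, Set.mem_insert_iff, Finset.coe_singleton,
                  Set.mem_singleton_iff, Set.mem_empty_iff_false, iff_false,
                  not_and, not_or]
                intro hadj
                refine ⟨?_, ?_, ?_, ?_⟩ <;> rintro rfl
                · rcases hAdjv hadj.symm with rfl | rfl | rfl
                  · exact hhx rfl
                  · exact hhu rfl
                  · exact hha rfl
                · exact hhv (hAdjx hadj.symm)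
                · rcases hAdju hadj.symm with rfl | rfl | rfl
                  · exact hhv rfl
                  · exact hhw rfl
                  · exact hhz rfl
                · rcases hAdja hadj.symm with rfl | rfl | rfl
                  · exact hhv rfl
                  · exact hht1 rfl
                  · exact hht2 rfl
              · rw [sum4 _ w z t1 t2 (Ne.symm hzw) (fun h => ht1w h.symm)
                    (fun h => ht2w h.symm) (fun h => ht1z h.symm) (fun h => ht2z h.symm)
                    ht12,
                  sum4 _ w z t1 t2 (Ne.symm hzw) (fun h => ht1w h.symm)
                    (fun h => ht2w h.symm) (fun h => ht1z h.symm) (fun h => ht2z h.symm)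
                    ht12,
                  hsumD, hw1, hz1, ht1e, ht2e, hdw, hda_3]
                have hg := good_arith (deg G z) (deg G t1) (deg G t2) hdz2 hdz3
                  (deg_pos hat1) (hsub t1) (deg_pos hat2) (hsub t2) hbad1 hbad2
                simp only [show w0 3 = 5 from rfl, show w0 1 = 9 from rfl,
                  show (3 : ℕ) - 1 = 2 from rfl, show w0 2 = 6 from rfl] at hg ⊢
                omega
end
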